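/- arXiv:1707.09027 — 14 statements merged into one kernel-verified Lean document; each statement's English description precedes it below -/
import Mathlib

section
/- Every topological group that is a P-space (countable intersections of open sets are open) is non-archimedean, i.e., has a local base at the identity consisting of open subgroups. -/
open Filter Set Topology Pointwise

universe u v

/-- A P-space: countable intersections of open sets are open. -/
def IsPSpace (X : Type*) [TopologicalSpace X] : Prop :=
  ∀ s : ℕ → Set X, (∀ n, IsOpen (s n)) → IsOpen (⋂ n, s n)

/-- A uniform P-space: countable intersections of entourages are entourages. -/
def IsUniformPSpace (X : Type*) [UniformSpace X] : Prop :=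
  ∀ s : ℕ → Set (X × X), (∀ n, s n ∈ uniformity X) → (⋂ n, s n) ∈ uniformity X

/-- The left uniformity of a topological group, as a filter on `G × G`. -/
def leftUnif (G : Type*) [Group G] [TopologicalSpace G] : Filter (G × G) :=
  Filter.comap (fun p : G × G => p.1⁻¹ * p.2) (nhds 1)

/-- The right uniformity of a topological group, as a filter on `G × G`. -/
def rightUnif (G : Type*) [Group G] [TopologicalSpace G] : Filter (G × G) :=
  Filter.comap (fun p : G × G => p.1 * p.2⁻¹) (nhds 1)

/-- The two-sided uniformity (supremum of left and right uniformities). -/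
def twoSidedUnif (G : Type*) [Group G] [TopologicalSpace G] : Filter (G × G) :=
  leftUnif G ⊓ rightUnif G

/-- `ε` belongs to the trace of the filter `μ` on the subset `B`. -/
def MemTrace {G : Type*} (μ : Filter (G × G)) (B : Set G) (ε : Set (G × G)) : Prop :=
  ∃ δ ∈ μ, δ ∩ B ×ˢ B = ε ∩ B ×ˢ B

/-- `f : B → ℝ` is uniformly continuous for the trace on `B` of the filter `μ` on `G × G`. -/
def UCOn {G : Type*} (μ : Filter (G × G)) (B : Set G) (f : B → ℝ) : Prop :=
  ∀ e : ℝ, 0 < e → ∃ δ ∈ μ, ∀ x y : B, ((x : G), (y : G)) ∈ δ → |f x - f y| < e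

/-- `ε` is an equivalence relation on the subset `B`. -/
def IsEquivOn {G : Type*} (B : Set G) (ε : Set (G × G)) : Prop :=
  (∀ x ∈ B, (x, x) ∈ ε) ∧ (∀ x ∈ B, ∀ y ∈ B, (x, y) ∈ ε → (y, x) ∈ ε) ∧
    (∀ x ∈ B, ∀ y ∈ B, ∀ z ∈ B, (x, y) ∈ ε → (y, z) ∈ ε → (x, z) ∈ ε)

/-- The relation `ε` has at most `c` equivalence classes on `B`. -/
def ClassesLE {G : Type*} (B : Set G) (ε : Set (G × G)) (c : Cardinal) : Prop :=
  Cardinal.mk ↥(Set.range fun x : B => {y : B | ((x : G), (y : G)) ∈ ε}) ≤ c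

/-- The symmetric subset `B` of a topological group `G` is functionally balanced. -/
def FunBalancedOn (G : Type*) [Group G] [TopologicalSpace G] (B : Set G) : Prop :=
  ∀ f : B → ℝ, (∃ M : ℝ, ∀ x : B, |f x| ≤ M) →
    UCOn (leftUnif G) B f → UCOn (rightUnif G) B f

/-- The symmetric subset `B` of a topological group `G` is strongly functionally balanced. -/
def StronglyFunBalancedOn (G : Type*) [Group G] [TopologicalSpace G] (B : Set G) : Prop :=
  ∀ f : B → ℝ, UCOn (leftUnif G) B f → UCOn (rightUnif G) B f

/-- A non-archimedean topological group: open subgroups form a base at the identity. -/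
def IsNonArchGroup (G : Type*) [Group G] [TopologicalSpace G] : Prop :=
  ∀ U ∈ nhds (1 : G), ∃ H : Subgroup G, IsOpen (H : Set G) ∧ (H : Set G) ⊆ U

/-- Words of length at most `n` in the free group. -/
def Bword (X : Type*) [DecidableEq X] (n : ℕ) : Set (FreeGroup X) :=
  {w : FreeGroup X | w.toWord.length ≤ n}

/-- The given group topology on `FreeGroup X` makes it the uniform free topological group
over the uniform space `X`: the canonical map is uniformly continuous (for the two-sided
uniformity) and every uniformly continuous map to a topological group extends to a
continuous homomorphism. -/
def IsUniformFreeTopGroup (X : Type u) [UniformSpace X] [TopologicalSpace (FreeGroup X)]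
    [IsTopologicalGroup (FreeGroup X)] : Prop :=
  Filter.Tendsto (Prod.map (FreeGroup.of : X → FreeGroup X) FreeGroup.of) (uniformity X)
      (twoSidedUnif (FreeGroup X)) ∧
    ∀ (G : Type u) [Group G] [TopologicalSpace G] [IsTopologicalGroup G] (φ : X → G),
      Filter.Tendsto (Prod.map φ φ) (uniformity X) (twoSidedUnif G) →
        Continuous ⇑(FreeGroup.lift φ)

/-- The given group topology on `FreeGroup X` makes it the free non-archimedean balanced
topological group over the uniform space `X`. -/
def IsFreeNABalancedGroup (X : Type u) [UniformSpace X] [TopologicalSpace (FreeGroup X)]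
    [IsTopologicalGroup (FreeGroup X)] : Prop :=
  IsNonArchGroup (FreeGroup X) ∧ leftUnif (FreeGroup X) = rightUnif (FreeGroup X) ∧
    Filter.Tendsto (Prod.map (FreeGroup.of : X → FreeGroup X) FreeGroup.of) (uniformity X)
      (twoSidedUnif (FreeGroup X)) ∧
    ∀ (G : Type u) [Group G] [TopologicalSpace G] [IsTopologicalGroup G] (φ : X → G),
      IsNonArchGroup G → leftUnif G = rightUnif G →
      Filter.Tendsto (Prod.map φ φ) (uniformity X) (twoSidedUnif G) →
        Continuous ⇑(FreeGroup.lift φ)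

/-- every topological group which is a P-space is non-archimedean. -/
theorem pGroup_isNonArch (G : Type*) [Group G] [TopologicalSpace G] [IsTopologicalGroup G]
    (hP : IsPSpace G) : IsNonArchGroup G := by
  intro U hU
  have key : ∀ W : Set G, W ∈ nhds 1 →
      ∃ V : Set G, IsOpen V ∧ (1:G) ∈ V ∧ V⁻¹ = V ∧ V * V ⊆ W := by
    intro W hW
    obtain ⟨V, hVo, hV1, hVV⟩ := exists_open_nhds_one_mul_subset hW
    refine ⟨V ∩ V⁻¹, hVo.inter hVo.inv, ⟨hV1, by simpa using hV1⟩, ?_, ?_⟩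
    · ext x; simp [and_comm]
    · exact (Set.mul_subset_mul Set.inter_subset_left Set.inter_subset_left).trans hVV
  have main : ∃ V : ℕ → Set G, (∀ n, IsOpen (V n) ∧ (1:G) ∈ V n ∧ (V n)⁻¹ = V n) ∧
      V 0 * V 0 ⊆ U ∧ ∀ n, V (n+1) * V (n+1) ⊆ V n := by
    obtain ⟨V0, h0o, h01, h0s, h0m⟩ := key U hU
    have next : ∀ t : {V : Set G // IsOpen V ∧ (1:G) ∈ V ∧ V⁻¹ = V},
        ∃ t' : {V : Set G // IsOpen V ∧ (1:G) ∈ V ∧ V⁻¹ = V}, t'.1 * t'.1 ⊆ t.1 := by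
      rintro ⟨V, hVo, hV1, hVs⟩
      obtain ⟨V', a, b, c, d⟩ := key V (hVo.mem_nhds hV1)
      exact ⟨⟨V', a, b, c⟩, d⟩
    choose g hg using next
    set seq : ℕ → {V : Set G // IsOpen V ∧ (1:G) ∈ V ∧ V⁻¹ = V} :=
      fun n => g^[n] ⟨V0, h0o, h01, h0s⟩ with hseq
    refine ⟨fun n => (seq n).1, fun n => (seq n).2, h0m, fun n => ?_⟩
    have h : seq (n+1) = g (seq n) := Function.iterate_succ_apply' g n _
    show (seq (n+1)).1 * (seq (n+1)).1 ⊆ (seq n).1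
    rw [h]; exact hg (seq n)
  obtain ⟨V, hV, hV0, hVstep⟩ := main
  have hWopen : IsOpen (⋂ n, V n) := hP V fun n => (hV n).1
  have hW1 : (1:G) ∈ ⋂ n, V n := Set.mem_iInter.2 fun n => (hV n).2.1
  have hWmul : ∀ {a b : G}, a ∈ ⋂ n, V n → b ∈ ⋂ n, V n → a * b ∈ ⋂ n, V n := by
    intro a b ha hb
    exact Set.mem_iInter.2 fun n =>
      hVstep n (Set.mul_mem_mul (Set.mem_iInter.1 ha (n+1)) (Set.mem_iInter.1 hb (n+1)))
  have hWinv : ∀ {a : G}, a ∈ ⋂ n, V n → a⁻¹ ∈ ⋂ n, V n := by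
    intro a ha
    refine Set.mem_iInter.2 fun n => ?_
    rw [← (hV n).2.2]
    simpa using Set.mem_iInter.1 ha n
  refine ⟨{ carrier := (⋂ n, V n)
            mul_mem' := hWmul
            one_mem' := hW1
            inv_mem' := hWinv }, hWopen, ?_⟩
  intro x hx
  simpa using hV0 (Set.mul_mem_mul (Set.mem_iInter.1 hx 0) (hV 0).2.1)
end

section
/- If (X, U) is a uniform P-space, then it is non-archimedean: for every entourage ε ∈ U there exists an equivalence relation δ ∈ U with δ ⊆ ε. -/
open Filter Set Topology Pointwise

universe u v

open scoped Uniformity SetRel in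
/-- a uniform P-space is non-archimedean. -/
theorem uniformPSpace_nonArch (X : Type*) [UniformSpace X] (hP : IsUniformPSpace X)
    (ε : Set (X × X)) (hε : ε ∈ uniformity X) :
    ∃ δ ∈ uniformity X, δ ⊆ ε ∧ (∀ x : X, (x, x) ∈ δ) ∧
      (∀ x y : X, (x, y) ∈ δ → (y, x) ∈ δ) ∧
      (∀ x y z : X, (x, y) ∈ δ → (y, z) ∈ δ → (x, z) ∈ δ) := by
  classical
  let next : {V : Set (X × X) // V ∈ uniformity X} → {V : Set (X × X) // V ∈ uniformity X} :=
    fun V => ⟨(comp_symm_mem_uniformity_sets V.2).choose,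
      (comp_symm_mem_uniformity_sets V.2).choose_spec.1⟩
  have hnext_symm : ∀ V, SetRel.IsSymm (next V : Set (X × X)) :=
    fun V => (comp_symm_mem_uniformity_sets V.2).choose_spec.2.1
  have hnext_comp : ∀ V, (next V : Set (X × X)) ○ (next V : Set (X × X)) ⊆ (V : Set (X × X)) :=
    fun V => (comp_symm_mem_uniformity_sets V.2).choose_spec.2.2
  let s : ℕ → {V : Set (X × X) // V ∈ uniformity X} := fun n => next^[n + 1] ⟨ε, hε⟩
  have hs_succ : ∀ n, s (n + 1) = next (s n) := fun n =>
    Function.iterate_succ_apply' next (n + 1) _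
  have hs0 : s 0 = next ⟨ε, hε⟩ := rfl
  have hs_symm : ∀ n, SetRel.IsSymm (s n : Set (X × X)) := by
    intro n
    cases n with
    | zero => exact hnext_symm _
    | succ m => rw [hs_succ]; exact hnext_symm _
  refine ⟨⋂ n, (s n : Set (X × X)), hP _ (fun n => (s n).2), ?_, ?_, ?_, ?_⟩
  · intro p hp
    have h0 : p ∈ (s 0 : Set (X × X)) := Set.mem_iInter.1 hp 0
    have hrefl : (p.1, p.1) ∈ (s 0 : Set (X × X)) := refl_mem_uniformity (s 0).2
    have : p ∈ (s 0 : Set (X × X)) ○ (s 0 : Set (X × X)) := ⟨p.1, hrefl, h0⟩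
    exact hnext_comp ⟨ε, hε⟩ this
  · intro x
    exact Set.mem_iInter.2 fun n => refl_mem_uniformity (s n).2
  · intro x y h
    exact Set.mem_iInter.2 fun n => (hs_symm n).symm _ _ (Set.mem_iInter.1 h n)
  · intro x y z hxy hyz
    refine Set.mem_iInter.2 fun n => ?_
    have h1 : (x, y) ∈ (s (n + 1) : Set (X × X)) := Set.mem_iInter.1 hxy (n + 1)
    have h2 : (y, z) ∈ (s (n + 1) : Set (X × X)) := Set.mem_iInter.1 hyz (n + 1)
    have : (x, z) ∈ (s (n + 1) : Set (X × X)) ○ (s (n + 1) : Set (X × X)) := ⟨y, h1, h2⟩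
    rw [hs_succ] at this
    exact hnext_comp (s n) this
end

section
/- Let τ be an infinite cardinal and G a topological group in which the intersection of any family of at most τ open sets is open. If G is τ-bounded, then G is balanced (its left and right uniformities coincide). -/
open Filter Set Topology Pointwise

universe u v

/-- a τ-bounded group in which τ-fold intersections of open sets are open
is balanced. -/
theorem tauBounded_balanced (G : Type u) [Group G] [TopologicalSpace G] [IsTopologicalGroup G]
    (τ : Cardinal.{u}) (hτ : Cardinal.aleph0 ≤ τ)
    (hopen : ∀ (ι : Type u) (s : ι → Set G), Cardinal.mk ι ≤ τ →
      (∀ i, IsOpen (s i)) → IsOpen (⋂ i, s i))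
    (hbdd : ∀ U ∈ nhds (1 : G), ∃ F : Set G, Cardinal.mk ↥F ≤ τ ∧ F * U = Set.univ) :
    leftUnif G = rightUnif G := by
  -- Key claim: every neighborhood of 1 contains a symmetric "invariant" neighborhood.
  have key : ∀ U ∈ nhds (1 : G), ∃ V ∈ nhds (1 : G),
      (∀ x ∈ V, x⁻¹ ∈ V) ∧ ∀ g x : G, x ∈ V → g⁻¹ * x * g ∈ U := by
    intro U hU
    obtain ⟨V₁, V₁o, h1V₁, hV₁⟩ := exists_open_nhds_one_mul_subset hU
    obtain ⟨W, Wo, h1W, hW⟩ :=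
      exists_open_nhds_one_mul_subset (V₁o.mem_nhds h1V₁)
    set W' : Set G := W ∩ W⁻¹ with hW'def
    have hW'o : IsOpen W' := Wo.inter Wo.inv
    have h1W' : (1 : G) ∈ W' := ⟨h1W, by simpa using h1W⟩
    have hW'sym : ∀ x ∈ W', x⁻¹ ∈ W' := by
      rintro x ⟨hx1, hx2⟩
      exact ⟨hx2, by simpa using hx1⟩
    have hW'3 : ∀ a ∈ W', ∀ b ∈ W', ∀ c ∈ W', a * b * c ∈ U := by
      intro a ha b hb c hc
      have hab : a * b ∈ V₁ := hW (Set.mul_mem_mul ha.1 hb.1)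
      have hc' : c ∈ V₁ := hW (by simpa using Set.mul_mem_mul hc.1 h1W)
      exact hV₁ (Set.mul_mem_mul hab hc')
    obtain ⟨F, hF, hFW⟩ := hbdd W' (hW'o.mem_nhds h1W')
    set s : ↥F → Set G := fun f => (fun x => (f : G)⁻¹ * x * f) ⁻¹' W' with hs
    have hsopen : ∀ f, IsOpen (s f) := by
      intro f
      exact hW'o.preimage (by fun_prop)
    have hVo : IsOpen (⋂ f, s f) := hopen ↥F s hF hsopen
    have h1V : (1 : G) ∈ ⋂ f, s f := by
      refine Set.mem_iInter.2 fun f => ?_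
      simp only [s, Set.mem_preimage, mul_one, inv_mul_cancel]
      exact h1W'
    refine ⟨⋂ f, s f, hVo.mem_nhds h1V, ?_, ?_⟩
    · intro x hx
      refine Set.mem_iInter.2 fun f => ?_
      have hxf : (f : G)⁻¹ * x * f ∈ W' := Set.mem_iInter.1 hx f
      have := hW'sym _ hxf
      simp only [s, Set.mem_preimage]
      have heq : (f : G)⁻¹ * x⁻¹ * f = ((f : G)⁻¹ * x * f)⁻¹ := by group
      rw [heq]
      exact this
    · intro g x hx
      have hg : g ∈ F * W' := by rw [hFW]; trivial
      obtain ⟨f, hf, w, hw, rfl⟩ := hg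
      have hxf : (f : G)⁻¹ * x * f ∈ W' := Set.mem_iInter.1 hx ⟨f, hf⟩
      have hw' : w⁻¹ ∈ W' := hW'sym _ hw
      have := hW'3 _ hw' _ hxf _ hw
      have heq : (f * w)⁻¹ * x * (f * w) = w⁻¹ * (f⁻¹ * x * f) * w := by group
      rw [heq]
      exact this
  apply le_antisymm
  · intro t ht
    rw [rightUnif, Filter.mem_comap] at ht
    obtain ⟨U, hU, hUt⟩ := ht
    obtain ⟨V, hV, hsym, hconj⟩ := key U hU
    rw [leftUnif, Filter.mem_comap]
    refine ⟨V, hV, fun p hp => hUt ?_⟩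
    have heq : p.1 * p.2⁻¹ = (p.1⁻¹)⁻¹ * (p.1⁻¹ * p.2)⁻¹ * p.1⁻¹ := by group
    show p.1 * p.2⁻¹ ∈ U
    rw [heq]
    exact hconj p.1⁻¹ _ (hsym _ hp)
  · intro t ht
    rw [leftUnif, Filter.mem_comap] at ht
    obtain ⟨U, hU, hUt⟩ := ht
    obtain ⟨V, hV, hsym, hconj⟩ := key U hU
    rw [rightUnif, Filter.mem_comap]
    refine ⟨V, hV, fun p hp => hUt ?_⟩
    have heq : p.1⁻¹ * p.2 = p.1⁻¹ * (p.1 * p.2⁻¹)⁻¹ * p.1 := by group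
    show p.1⁻¹ * p.2 ∈ U
    rw [heq]
    exact hconj p.1 _ (hsym _ hp)
end

section
/- Every ℵ₀-bounded P-group is balanced. -/
open Filter Set Topology Pointwise

universe u v

section Aux

variable {G : Type*} [Group G] [TopologicalSpace G] [IsTopologicalGroup G]

/-- In a P-group, every neighborhood of 1 contains an open "subgroup-like" set. -/
lemma pgroup_open_subgroup
    (hP : ∀ s : ℕ → Set G, (∀ n, IsOpen (s n)) → IsOpen (⋂ n, s n))
    {U : Set G} (hU : U ∈ nhds (1 : G)) :
    ∃ H : Set G, IsOpen H ∧ (1 : G) ∈ H ∧ H ⊆ U ∧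
      (∀ x ∈ H, ∀ y ∈ H, x * y ∈ H) ∧ (∀ x ∈ H, x⁻¹ ∈ H) := by
  -- shrink step
  have shrink : ∀ W : {V : Set G // IsOpen V ∧ (1:G) ∈ V ∧ V⁻¹ = V},
      ∃ V : {V : Set G // IsOpen V ∧ (1:G) ∈ V ∧ V⁻¹ = V},
        V.1 * V.1 ⊆ W.1 := by
    rintro ⟨W, hWo, hW1, -⟩
    obtain ⟨V, hVo, hV1, hVV⟩ := exists_open_nhds_one_mul_subset (hWo.mem_nhds hW1)
    refine ⟨⟨V ∩ V⁻¹, hVo.inter hVo.inv, ⟨hV1, by simpa using hV1⟩, ?_⟩, ?_⟩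
    · simp [Set.inter_comm, Set.inter_inv]
    · exact fun x hx => hVV (Set.mul_subset_mul inter_subset_left inter_subset_left hx)
  choose st hst using shrink
  obtain ⟨W0, hW0U, hW0o, hW01⟩ := mem_nhds_iff.mp hU
  set t0 : {V : Set G // IsOpen V ∧ (1:G) ∈ V ∧ V⁻¹ = V} :=
    ⟨W0 ∩ W0⁻¹, hW0o.inter hW0o.inv, ⟨hW01, by simpa using hW01⟩,
      by simp [Set.inter_comm, Set.inter_inv]⟩ with ht0
  set V : ℕ → Set G := fun n => (st^[n] t0).1 with hV
  have hVo : ∀ n, IsOpen (V n) := fun n => (st^[n] t0).2.1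
  have hV1 : ∀ n, (1:G) ∈ V n := fun n => (st^[n] t0).2.2.1
  have hVinv : ∀ n, (V n)⁻¹ = V n := fun n => (st^[n] t0).2.2.2
  have hVmul : ∀ n, V (n+1) * V (n+1) ⊆ V n := by
    intro n
    have : st^[n+1] t0 = st (st^[n] t0) := Function.iterate_succ_apply' st n t0
    simpa [hV, this] using hst (st^[n] t0)
  refine ⟨⋂ n, V n, hP V hVo, Set.mem_iInter.mpr hV1, ?_, ?_, ?_⟩
  · intro x hx
    have : x ∈ V 0 := Set.mem_iInter.mp hx 0
    exact hW0U (this.1)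
  · intro x hx y hy
    refine Set.mem_iInter.mpr fun n => hVmul n ?_
    exact Set.mul_mem_mul (Set.mem_iInter.mp hx (n+1)) (Set.mem_iInter.mp hy (n+1))
  · intro x hx
    refine Set.mem_iInter.mpr fun n => ?_
    rw [← hVinv n]
    exact Set.inv_mem_inv.mpr (Set.mem_iInter.mp hx n)

/-- In an ℵ₀-bounded P-group, every neighborhood of 1 contains an open invariant
symmetric neighborhood of 1. -/
lemma pgroup_open_normal
    (hP : ∀ s : ℕ → Set G, (∀ n, IsOpen (s n)) → IsOpen (⋂ n, s n))
    (hbdd : ∀ U ∈ nhds (1 : G), ∃ F : Set G, F.Countable ∧ F * U = Set.univ)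
    {U : Set G} (hU : U ∈ nhds (1 : G)) :
    ∃ N : Set G, N ∈ nhds (1 : G) ∧ N ⊆ U ∧ (∀ x ∈ N, x⁻¹ ∈ N) ∧
      ∀ g : G, ∀ x ∈ N, g * x * g⁻¹ ∈ N := by
  obtain ⟨H, hHo, hH1, hHU, hHmul, hHinv⟩ := pgroup_open_subgroup hP hU
  obtain ⟨F, hFc, hFH⟩ := hbdd H (hHo.mem_nhds hH1)
  have hF'c : (insert (1:G) F).Countable := hFc.insert 1
  obtain ⟨f, hf⟩ := Set.Countable.exists_eq_range hF'c (insert_nonempty _ _)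
  have hcov : ∀ g : G, ∃ m : ℕ, ∃ h ∈ H, g = f m * h := by
    intro g
    have : g ∈ F * H := by
      have : g ∈ (Set.univ : Set G) := trivial
      rwa [← hFH] at this
    obtain ⟨a, ha, h, hh, rfl⟩ := this
    have : a ∈ Set.range f := by rw [← hf]; exact Set.mem_insert_of_mem _ ha
    obtain ⟨m, rfl⟩ := this
    exact ⟨m, h, hh, rfl⟩
  set N : Set G := ⋂ n, (fun x => (f n)⁻¹ * x * f n) ⁻¹' H with hN
  have hNmem : ∀ x, x ∈ N ↔ ∀ n, (f n)⁻¹ * x * f n ∈ H := fun x => Set.mem_iInter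
  have hNo : IsOpen N := hP _ (fun n => (hHo.preimage (by continuity)))
  have hN1 : (1:G) ∈ N := (hNmem 1).mpr (fun n => by simpa using hH1)
  have hNU : N ⊆ U := by
    intro x hx
    have h1 : (1:G) ∈ Set.range f := by rw [← hf]; exact Set.mem_insert _ _
    obtain ⟨n, hn⟩ := h1
    have := (hNmem x).mp hx n
    rw [hn] at this
    simpa using hHU this
  have hconj : ∀ g : G, ∀ x ∈ N, g * x * g⁻¹ ∈ N := by
    intro g x hx
    refine (hNmem _).mpr fun n => ?_
    obtain ⟨m, h, hh, hgm⟩ := hcov (g⁻¹ * f n)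
    have key : (f n)⁻¹ * (g * x * g⁻¹) * f n
        = h⁻¹ * ((f m)⁻¹ * x * f m) * h := by
      have : g⁻¹ * f n = f m * h := hgm
      have hg : (f n)⁻¹ * g = h⁻¹ * (f m)⁻¹ := by
        have := congrArg (fun y => y⁻¹) this
        simpa [mul_assoc] using this
      have hg' : g⁻¹ * f n = f m * h := this
      calc (f n)⁻¹ * (g * x * g⁻¹) * f n
          = ((f n)⁻¹ * g) * x * (g⁻¹ * f n) := by group
        _ = (h⁻¹ * (f m)⁻¹) * x * (f m * h) := by rw [hg, hg']
        _ = h⁻¹ * ((f m)⁻¹ * x * f m) * h := by group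
    rw [key]
    exact hHmul _ (hHmul _ (hHinv h hh) _ ((hNmem x).mp hx m)) _ hh
  refine ⟨N, hNo.mem_nhds hN1, hNU, ?_, hconj⟩
  intro x hx
  refine (hNmem _).mpr fun n => ?_
  have := hHinv _ ((hNmem x).mp hx n)
  simpa [mul_assoc] using this

end Aux

/-- an ℵ₀-bounded P-group is balanced. -/
theorem aleph0Bounded_pGroup_balanced (G : Type*) [Group G] [TopologicalSpace G]
    [IsTopologicalGroup G] (hP : IsPSpace G)
    (hbdd : ∀ U ∈ nhds (1 : G), ∃ F : Set G, F.Countable ∧ F * U = Set.univ) :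
    leftUnif G = rightUnif G := by
  have key : ∀ U ∈ nhds (1 : G), ∃ N ∈ nhds (1 : G), N ⊆ U ∧ (∀ x ∈ N, x⁻¹ ∈ N) ∧
      ∀ g : G, ∀ x ∈ N, g * x * g⁻¹ ∈ N := by
    intro U hU
    obtain ⟨N, h1, h2, h3, h4⟩ := pgroup_open_normal hP hbdd hU
    exact ⟨N, h1, h2, h3, h4⟩
  apply le_antisymm
  · intro s hs
    rw [rightUnif, Filter.mem_comap] at hs
    obtain ⟨t, ht, hts⟩ := hs
    obtain ⟨N, hN, hNt, hNinv, hNconj⟩ := key t ht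
    rw [leftUnif, Filter.mem_comap]
    refine ⟨N, hN, fun p hp => hts ?_⟩
    simp only [Set.mem_preimage] at hp ⊢
    apply hNt
    -- p.1⁻¹ * p.2 ∈ N ⊢ p.1 * p.2⁻¹ ∈ N
    have h1 : p.2⁻¹ * p.1 ∈ N := by simpa [mul_inv_rev] using hNinv _ hp
    have := hNconj p.1 _ h1
    simpa [mul_assoc] using this
  · intro s hs
    rw [leftUnif, Filter.mem_comap] at hs
    obtain ⟨t, ht, hts⟩ := hs
    obtain ⟨N, hN, hNt, hNinv, hNconj⟩ := key t ht
    rw [rightUnif, Filter.mem_comap]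
    refine ⟨N, hN, fun p hp => hts ?_⟩
    simp only [Set.mem_preimage] at hp ⊢
    apply hNt
    have h1 : p.2 * p.1⁻¹ ∈ N := by simpa [mul_inv_rev] using hNinv _ hp
    have := hNconj p.1⁻¹ _ h1
    simpa [mul_assoc] using this
end

section
/- Let (X, U) be a uniform P-space. A function f : X → ℝ is uniformly continuous if and only if there exists an entourage ε ∈ U such that (x, y) ∈ ε implies f(x) = f(y). -/
open Filter Set Topology Pointwise

universe u v

/-- on a uniform P-space, a real-valued function is uniformly continuous iff
it is constant on some entourage. -/
theorem uniformPSpace_uc_iff (X : Type*) [UniformSpace X] (hP : IsUniformPSpace X)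
    (f : X → ℝ) :
    UniformContinuous f ↔ ∃ ε ∈ uniformity X, ∀ x y : X, (x, y) ∈ ε → f x = f y := by
  constructor
  · intro hf
    have hmem : ∀ n : ℕ, {p : X × X | |f p.1 - f p.2| < 1 / (n + 1)} ∈ uniformity X := by
      intro n
      have := hf (Metric.dist_mem_uniformity (show (0:ℝ) < 1 / (n + 1) by positivity))
      filter_upwards [this] with p hp
      simpa [Real.dist_eq] using hp
    refine ⟨⋂ n : ℕ, {p : X × X | |f p.1 - f p.2| < 1 / (n + 1)}, hP _ hmem, ?_⟩
    intro x y hxy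
    have h : ∀ n : ℕ, |f x - f y| < 1 / (n + 1) := fun n => Set.mem_iInter.1 hxy n
    have h0 : |f x - f y| ≤ 0 := by
      by_contra hc
      push_neg at hc
      obtain ⟨n, hn⟩ := exists_nat_one_div_lt hc
      exact absurd (h n) (not_lt.2 hn.le)
    have := abs_nonneg (f x - f y)
    have : |f x - f y| = 0 := le_antisymm h0 this
    have := abs_eq_zero.1 this
    linarith
  · rintro ⟨ε, hε, hconst⟩
    intro V hV
    apply Filter.mem_of_superset hε
    rintro ⟨x, y⟩ hxy
    have : f x = f y := hconst x y hxy
    simp only [Set.mem_preimage, Prod.map_apply, this]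
    exact refl_mem_uniformity hV
end

section
/- Let G be a P-group and B a symmetric subset of G. If B is functionally balanced, then every equivalence relation ε in the trace of the left uniformity on B having at most 𝔠 (continuum) equivalence classes belongs to the trace of the right uniformity on B. -/
open Filter Set Topology Pointwise

universe u v

/-- for a functionally balanced symmetric subset `B` of a P-group, every
equivalence relation in the left trace uniformity with at most 𝔠 classes lies in the
right trace uniformity. -/
theorem funBalanced_equivRel_mem_right (G : Type*) [Group G] [TopologicalSpace G]
    [IsTopologicalGroup G] (hP : IsPSpace G) (B : Set G) (hB : B⁻¹ = B)
    (hFB : FunBalancedOn G B) (ε : Set (G × G)) (hsub : ε ⊆ B ×ˢ B)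
    (heq : IsEquivOn B ε) (htr : MemTrace (leftUnif G) B ε)
    (hcard : ClassesLE B ε Cardinal.continuum) :
    MemTrace (rightUnif G) B ε := by
  classical
  obtain ⟨δ, hδ, hδε⟩ := htr
  obtain ⟨hrefl, hsymm, htrans⟩ := heq
  set cls : B → Set B := fun x => {y : B | ((x : G), (y : G)) ∈ ε} with hclsdef
  have key : ∀ x y : B, ((x : G), (y : G)) ∈ ε ↔ cls x = cls y := by
    intro x y
    constructor
    · intro h
      ext z
      simp only [hclsdef, Set.mem_setOf_eq]
      constructor
      · intro hz
        exact htrans _ y.2 _ x.2 _ z.2 (hsymm _ x.2 _ y.2 h) hz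
      · intro hz
        exact htrans _ x.2 _ y.2 _ z.2 h hz
    · intro h
      have hy : y ∈ cls y := hrefl _ y.2
      rw [← h] at hy
      exact hy
  -- embedding of classes into ℝ
  have hle : Cardinal.mk ↥(Set.range cls) ≤ Cardinal.mk (ULift.{_} ℝ) := by
    rw [Cardinal.mk_uLift, Cardinal.mk_real, Cardinal.lift_continuum]
    exact hcard
  obtain ⟨j⟩ := (Cardinal.le_def _ _).mp hle
  set f : B → ℝ := fun x => Real.arctan (j ⟨cls x, Set.mem_range_self x⟩).down with hfdef
  have hfeq : ∀ x y : B, f x = f y ↔ ((x : G), (y : G)) ∈ ε := by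
    intro x y
    rw [key]
    constructor
    · intro h
      have := Real.arctan_injective h
      have := j.injective (ULift.ext _ _ this)
      exact congrArg Subtype.val this
    · intro h
      simp only [hfdef, h]
  have hbdd : ∃ M : ℝ, ∀ x : B, |f x| ≤ M := by
    refine ⟨Real.pi / 2, fun x => ?_⟩
    exact le_of_lt (abs_lt.mpr ⟨Real.neg_pi_div_two_lt_arctan _, Real.arctan_lt_pi_div_two _⟩)
  have hluc : UCOn (leftUnif G) B f := by
    intro e he
    refine ⟨δ, hδ, fun x y hxy => ?_⟩
    have hmem : ((x : G), (y : G)) ∈ δ ∩ B ×ˢ B := ⟨hxy, x.2, y.2⟩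
    rw [hδε] at hmem
    rw [(hfeq x y).mpr hmem.1]
    simpa using he
  have hruc : UCOn (rightUnif G) B f := hFB f hbdd hluc
  choose D hD hDp using fun n : ℕ => hruc (1 / (n + 1)) (by positivity)
  have hcc : (⋂ n, D n) ∈ rightUnif G := by
    have hD' : ∀ n, ∃ U ∈ nhds (1 : G), (fun p : G × G => p.1 * p.2⁻¹) ⁻¹' U ⊆ D n := by
      intro n
      exact Filter.mem_comap.mp (hD n)
    choose U hU hUD using hD'
    have hV : ∀ n, ∃ V, V ⊆ U n ∧ IsOpen V ∧ (1 : G) ∈ V := fun n => mem_nhds_iff.mp (hU n)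
    choose V hVU hVopen hV1 using hV
    refine Filter.mem_comap.mpr ⟨⋂ n, V n, ?_, ?_⟩
    · exact (hP V hVopen).mem_nhds (Set.mem_iInter.mpr hV1)
    · rw [Set.preimage_iInter]
      exact Set.iInter_mono fun n => (Set.preimage_mono (hVU n)).trans (hUD n)
  refine ⟨(⋂ n, D n) ∪ ε, Filter.mem_of_superset hcc Set.subset_union_left, ?_⟩
  apply Set.Subset.antisymm
  · rintro ⟨p, q⟩ ⟨hin, hpq⟩
    rcases hin with hin | hin
    · set x : B := ⟨p, hpq.1⟩
      set y : B := ⟨q, hpq.2⟩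
      have hfxy : f x = f y := by
        by_contra hne
        have hpos : 0 < |f x - f y| := abs_pos.mpr (sub_ne_zero.mpr hne)
        obtain ⟨n, hn⟩ := exists_nat_one_div_lt hpos
        have := hDp n x y (Set.mem_iInter.mp hin n)
        exact absurd this (not_lt.mpr (le_of_lt hn))
      exact ⟨(hfeq x y).mp hfxy, hpq⟩
    · exact ⟨hin, hpq⟩
  · exact Set.inter_subset_inter_left _ Set.subset_union_right
end

section
/- Let G be a P-group and B a symmetric subset of G. Suppose every equivalence relation in the trace of the left uniformity of G on B with at most continuum-many equivalence classes belongs to the trace of the right uniformity. Then B is strongly functionally balanced: every (not necessarily bounded) real-valued left-uniformly continuous function on B is right-uniformly continuous. -/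
open Filter Set Topology Pointwise

universe u v

/-- if every equivalence relation in the left trace uniformity on `B` with at
most 𝔠 classes belongs to the right trace uniformity, then `B` is strongly functionally
balanced. -/
theorem equivRel_cond_implies_stronglyFunBalanced (G : Type*) [Group G] [TopologicalSpace G]
    [IsTopologicalGroup G] (hP : IsPSpace G) (B : Set G) (hB : B⁻¹ = B)
    (hcond : ∀ ε : Set (G × G), ε ⊆ B ×ˢ B → IsEquivOn B ε →
      MemTrace (leftUnif G) B ε → ClassesLE B ε Cardinal.continuum →
        MemTrace (rightUnif G) B ε) :
    StronglyFunBalancedOn G B := by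
  classical
  intro f hf
  -- extend f to all of G
  set g : G → ℝ := fun x => if h : x ∈ B then f ⟨x, h⟩ else 0 with hg
  have hgval : ∀ x : B, g (x : G) = f x := by
    intro x
    simp only [hg, dif_pos x.2]
  -- the equivalence relation "f x = f y" on B
  set ε : Set (G × G) := {p | p.1 ∈ B ∧ p.2 ∈ B ∧ g p.1 = g p.2} with hε
  have hsub : ε ⊆ B ×ˢ B := fun p hp => ⟨hp.1, hp.2.1⟩
  have hequiv : IsEquivOn B ε :=
    ⟨fun x hx => ⟨hx, hx, rfl⟩, fun x hx y hy h => ⟨hy, hx, h.2.2.symm⟩,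
      fun x hx y hy z hz h1 h2 => ⟨hx, hz, h1.2.2.trans h2.2.2⟩⟩
  -- choose open neighborhoods controlling f up to 1/(n+1)
  have hpick : ∀ n : ℕ, ∃ V : Set G, IsOpen V ∧ (1 : G) ∈ V ∧
      ∀ x y : B, (x : G)⁻¹ * y ∈ V → |f x - f y| < 1 / (n + 1) := by
    intro n
    obtain ⟨δ, hδ, hδf⟩ := hf (1 / (n + 1)) (by positivity)
    rw [leftUnif, Filter.mem_comap] at hδ
    obtain ⟨U, hU, hUδ⟩ := hδ
    refine ⟨interior U, isOpen_interior, mem_interior_iff_mem_nhds.2 hU, fun x y hxy => ?_⟩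
    have hxy' : (x : G)⁻¹ * y ∈ U := interior_subset hxy
    exact hδf x y (hUδ hxy')
  choose V hVopen hV1 hVf using hpick
  set W := ⋂ n, V n with hW
  have hWopen : IsOpen W := hP V hVopen
  have hW1 : (1 : G) ∈ W := mem_iInter.2 hV1
  -- ε belongs to the trace of the left uniformity on B
  have hmemL : MemTrace (leftUnif G) B ε := by
    refine ⟨(fun p : G × G => p.1⁻¹ * p.2) ⁻¹' W ∪ ε, ?_, ?_⟩
    · exact Filter.mem_of_superset (Filter.preimage_mem_comap (hWopen.mem_nhds hW1))
        Set.subset_union_left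
    · apply Set.Subset.antisymm
      · rintro ⟨x, y⟩ ⟨hxy, hxB, hyB⟩
        refine ⟨⟨hxB, hyB, ?_⟩, hxB, hyB⟩
        rcases hxy with hxy | hxy
        · have key : ∀ n : ℕ, |f ⟨x, hxB⟩ - f ⟨y, hyB⟩| < 1 / (n + 1) :=
            fun n => hVf n ⟨x, hxB⟩ ⟨y, hyB⟩ (mem_iInter.1 hxy n)
          have hfeq : f ⟨x, hxB⟩ = f ⟨y, hyB⟩ := by
            by_contra hne
            have hpos : 0 < |f ⟨x, hxB⟩ - f ⟨y, hyB⟩| := abs_pos.2 (sub_ne_zero.2 hne)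
            obtain ⟨n, hn⟩ := exists_nat_one_div_lt hpos
            exact lt_irrefl _ ((key n).trans hn)
          have h1 : g x = f ⟨x, hxB⟩ := by simp only [hg, dif_pos hxB]
          have h2 : g y = f ⟨y, hyB⟩ := by simp only [hg, dif_pos hyB]
          rw [h1, h2, hfeq]
        · exact hxy.2.2
      · exact fun p hp => ⟨Or.inr hp.1, hp.2⟩
  -- at most continuum many classes
  have hclass : ClassesLE B ε Cardinal.continuum := by
    have key : ∀ x₁ x₂ : B, g (x₁ : G) = g (x₂ : G) →
        {y : B | ((x₁ : G), (y : G)) ∈ ε} = {y : B | ((x₂ : G), (y : G)) ∈ ε} := by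
      intro x₁ x₂ h
      ext y
      simp only [hε, Set.mem_setOf_eq]
      exact ⟨fun hy => ⟨x₂.2, hy.2.1, h.symm.trans hy.2.2⟩,
        fun hy => ⟨x₁.2, hy.2.1, h.trans hy.2.2⟩⟩
    have hinj : Function.Injective
        (fun S : (Set.range fun x : B => {y : B | ((x : G), (y : G)) ∈ ε}) =>
          g ((Classical.choose S.2 : B) : G)) := by
      rintro ⟨S₁, h₁⟩ ⟨S₂, h₂⟩ hgeq
      have e₁ := Classical.choose_spec h₁
      have e₂ := Classical.choose_spec h₂
      apply Subtype.ext
      simp only at e₁ e₂ hgeq ⊢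
      rw [← e₁, ← e₂]
      exact key _ _ hgeq
    have hle := Cardinal.lift_mk_le'.2
      ⟨⟨fun S : (Set.range fun x : B => {y : B | ((x : G), (y : G)) ∈ ε}) =>
          g ((Classical.choose S.2 : B) : G), hinj⟩⟩
    rwa [Cardinal.lift_uzero, Cardinal.mk_real, Cardinal.lift_continuum] at hle
  -- conclude
  obtain ⟨δ', hδ', hδ'eq⟩ := hcond ε hsub hequiv hmemL hclass
  intro e he
  refine ⟨δ', hδ', fun x y hxy => ?_⟩
  have hm : ((x : G), (y : G)) ∈ δ' ∩ B ×ˢ B := ⟨hxy, x.2, y.2⟩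
  rw [hδ'eq] at hm
  have hfe : f x = f y := by
    have := hm.1.2.2
    rwa [hgval x, hgval y] at this
  simpa [hfe] using he
end

section
/- A P-group G is functionally balanced if and only if it is strongly functionally balanced. -/
open Filter Set Topology Pointwise

universe u v

lemma lipschitz_arctan : LipschitzWith 1 Real.arctan := by
  apply lipschitzWith_of_nnnorm_deriv_le Real.differentiable_arctan
  intro x
  rw [Real.deriv_arctan]
  rw [← NNReal.coe_le_coe]
  push_cast
  rw [Real.norm_eq_abs, abs_of_pos (by positivity)]
  rw [div_le_one (by positivity)]
  nlinarith [sq_nonneg x]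

lemma ptrick {G : Type*} [Group G] [TopologicalSpace G] (hP : IsPSpace G)
    (m : G × G → G) (f : G → ℝ)
    (h : ∀ e : ℝ, 0 < e → ∃ δ ∈ Filter.comap m (nhds (1:G)),
      ∀ x y : G, (x, y) ∈ δ → |f x - f y| < e) :
    ∃ δ ∈ Filter.comap m (nhds (1:G)), ∀ x y : G, (x, y) ∈ δ → f x = f y := by
  have key : ∀ n : ℕ, ∃ V : Set G, IsOpen V ∧ (1:G) ∈ V ∧
      ∀ x y : G, m (x, y) ∈ V → |f x - f y| < 1/(n+1) := by
    intro n
    obtain ⟨δ, hδ, hδ'⟩ := h (1/(n+1)) (by positivity)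
    obtain ⟨s, hs, hsub⟩ := hδ
    obtain ⟨V, hVs, hVo, hV1⟩ := mem_nhds_iff.mp hs
    exact ⟨V, hVo, hV1, fun x y hxy => hδ' x y (hsub (hVs hxy))⟩
  choose V hVo hV1 hVf using key
  refine ⟨m ⁻¹' ⋂ n, V n, ?_, ?_⟩
  · exact preimage_mem_comap ((hP V hVo).mem_nhds (mem_iInter.mpr hV1))
  · intro x y hxy
    by_contra hne
    obtain ⟨n, hn⟩ := exists_nat_one_div_lt (abs_pos.mpr (sub_ne_zero.mpr hne))
    exact absurd (hVf n x y (mem_iInter.mp hxy n)) (not_lt.mpr hn.le)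

/-- a P-group is functionally balanced iff it is strongly functionally
balanced. -/
theorem pGroup_funBalanced_iff_strong (G : Type*) [Group G] [TopologicalSpace G]
    [IsTopologicalGroup G] (hP : IsPSpace G) :
    FunBalancedOn G Set.univ ↔ StronglyFunBalancedOn G Set.univ := by
  constructor
  · intro hFB f hf
    set g : Set.univ (α := G) → ℝ := fun x => Real.arctan (f x) with hg
    have hgb : ∃ M : ℝ, ∀ x, |g x| ≤ M :=
      ⟨Real.pi/2, fun x => abs_le.mpr
        ⟨(Real.neg_pi_div_two_lt_arctan _).le, (Real.arctan_lt_pi_div_two _).le⟩⟩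
    have hgl : UCOn (leftUnif G) Set.univ g := by
      intro e he
      obtain ⟨δ, hδ, hδ'⟩ := hf e he
      refine ⟨δ, hδ, fun x y hxy => lt_of_le_of_lt ?_ (hδ' x y hxy)⟩
      simpa [Real.dist_eq] using lipschitz_arctan.dist_le_mul (f x) (f y)
    have hgr := hFB g hgb hgl
    obtain ⟨δ, hδ, hδ'⟩ := ptrick hP (fun p : G × G => p.1 * p.2⁻¹)
      (fun x => g ⟨x, Set.mem_univ x⟩) (fun e he => by
        obtain ⟨δ, hδm, hδ'⟩ := hgr e he
        exact ⟨δ, hδm, fun x y hxy =>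
          hδ' ⟨x, Set.mem_univ x⟩ ⟨y, Set.mem_univ y⟩ hxy⟩)
    intro e he
    refine ⟨δ, hδ, fun x y hxy => ?_⟩
    have hfe : f x = f y := Real.arctan_injective (by simpa [hg] using hδ' x y hxy)
    simpa [hfe] using he
  · intro hS f _ hf
    exact hS f hf
end

section
/- Let G be a 𝔠-bounded P-group. Then G is balanced if and only if G is functionally balanced. -/
open Filter Set Topology Pointwise

universe u v

section Aux

variable {G : Type*} [Group G] [TopologicalSpace G] [IsTopologicalGroup G]

/-- In a P-group, every neighborhood of 1 contains an open symmetric "subgroup" (as a set). -/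
lemma exists_open_symm_subgroup_subset (hP : IsPSpace G) {U : Set G} (hU : U ∈ nhds 1) :
    ∃ H : Set G, IsOpen H ∧ (1 : G) ∈ H ∧ (∀ a ∈ H, a⁻¹ ∈ H) ∧
      (∀ a ∈ H, ∀ b ∈ H, a * b ∈ H) ∧ H ⊆ U := by
  have step : ∀ V : Set G, IsOpen V → (1 : G) ∈ V →
      ∃ W : Set G, (IsOpen W ∧ (1 : G) ∈ W ∧ ∀ a ∈ W, a⁻¹ ∈ W) ∧ W * W ⊆ V ∧ W ⊆ V := by
    intro V hVo h1V
    obtain ⟨V', hV'o, h1V', hV'mul⟩ := exists_open_nhds_one_mul_subset (hVo.mem_nhds h1V)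
    refine ⟨V' ∩ V'⁻¹, ⟨hV'o.inter hV'o.inv, ⟨h1V', by simp [Set.mem_inv, h1V']⟩,
      fun a ha => ⟨Set.mem_inv.mp ha.2, by simpa [Set.mem_inv] using ha.1⟩⟩, ?_, ?_⟩
    · exact (Set.mul_subset_mul Set.inter_subset_left Set.inter_subset_left).trans hV'mul
    · intro a ha
      have : a * 1 ∈ V' * V' := Set.mul_mem_mul ha.1 h1V'
      simpa using hV'mul this
  obtain ⟨O, hOU, hOo, h1O⟩ := mem_nhds_iff.mp hU
  let T := {V : Set G // IsOpen V ∧ (1 : G) ∈ V ∧ ∀ a ∈ V, a⁻¹ ∈ V}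
  have hstep : ∀ t : T, ∃ t' : T, t'.1 * t'.1 ⊆ t.1 ∧ t'.1 ⊆ t.1 := by
    rintro ⟨V, hVo, h1V, -⟩
    obtain ⟨W, hW, hmul, hsub⟩ := step V hVo h1V
    exact ⟨⟨W, hW⟩, hmul, hsub⟩
  choose nxt hnxt1 hnxt2 using hstep
  obtain ⟨W0, hW0, hW0mul, hW0sub⟩ := step O hOo h1O
  set sq : ℕ → T := fun n => nxt^[n] ⟨W0, hW0⟩ with hsq
  have hsucc : ∀ n, sq (n + 1) = nxt (sq n) := fun n => Function.iterate_succ_apply' nxt n _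
  refine ⟨⋂ n, (sq n).1, hP _ (fun n => (sq n).2.1), ?_, ?_, ?_, ?_⟩
  · exact Set.mem_iInter.mpr fun n => (sq n).2.2.1
  · intro a ha
    exact Set.mem_iInter.mpr fun n => (sq n).2.2.2 a (Set.mem_iInter.mp ha n)
  · intro a ha b hb
    refine Set.mem_iInter.mpr fun n => ?_
    have ha' : a ∈ (nxt (sq n)).1 := by
      rw [← hsucc n]; exact Set.mem_iInter.mp ha (n + 1)
    have hb' : b ∈ (nxt (sq n)).1 := by
      rw [← hsucc n]; exact Set.mem_iInter.mp hb (n + 1)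
    exact hnxt1 (sq n) (Set.mul_mem_mul ha' hb')
  · intro a ha
    have : a ∈ W0 := Set.mem_iInter.mp ha 0
    exact hOU (hW0sub this)

lemma eq_zero_of_abs_lt_one_div (a : ℝ) (h : ∀ n : ℕ, |a| < 1 / (n + 1)) : a = 0 := by
  by_contra hne
  obtain ⟨n, hn⟩ := exists_nat_one_div_lt (abs_pos.mpr hne)
  exact absurd (h n) (not_lt.mpr hn.le)

end Aux

/-- a 𝔠-bounded P-group is balanced iff it is functionally balanced. -/
theorem cBounded_pGroup_balanced_iff_funBalanced (G : Type*) [Group G] [TopologicalSpace G]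
    [IsTopologicalGroup G] (hP : IsPSpace G)
    (hbdd : ∀ U ∈ nhds (1 : G), ∃ F : Set G,
      Cardinal.mk ↥F ≤ Cardinal.continuum ∧ F * U = Set.univ) :
    leftUnif G = rightUnif G ↔ FunBalancedOn G Set.univ := by
  constructor
  · -- balanced implies functionally balanced
    intro h f _ hf
    unfold FunBalancedOn UCOn at *
    rw [← h]
    exact hf
  · intro hFB
    have main : ∀ s ∈ leftUnif G, s ∈ rightUnif G := by
      intro s hs
      obtain ⟨U, hU, hUs⟩ := Filter.mem_comap.mp hs
      obtain ⟨H, hHo, h1H, hHinv, hHmul, hHU⟩ := exists_open_symm_subgroup_subset hP hU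
      have hHnhds : H ∈ nhds (1 : G) := hHo.mem_nhds h1H
      -- the coset setoid
      let r : Setoid G := ⟨fun x y => x⁻¹ * y ∈ H, by
        refine ⟨fun x => by simpa using h1H, fun {x y} hxy => ?_, fun {x y z} hxy hyz => ?_⟩
        · have := hHinv _ hxy
          simpa [mul_inv_rev] using this
        · have := hHmul _ hxy _ hyz
          simpa [mul_assoc] using this⟩
      -- cardinality of cosets is at most continuum
      obtain ⟨F, hFc, hFU⟩ := hbdd H hHnhds
      have hsurj : Function.Surjective (fun g : F => Quotient.mk r (g : G)) := by
        intro q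
        induction q using Quotient.ind with
        | _ x =>
          have hx : x ∈ F * H := hFU ▸ Set.mem_univ x
          obtain ⟨g, hg, h', hh', hgh⟩ := hx
          refine ⟨⟨g, hg⟩, Quotient.sound ?_⟩
          show g⁻¹ * x ∈ H
          rw [← hgh, ← mul_assoc, inv_mul_cancel, one_mul]
          exact hh'
      have hQ : Cardinal.mk (Quotient r) ≤ Cardinal.continuum :=
        (Cardinal.mk_le_of_surjective hsurj).trans hFc
      have hcard : Nonempty (Quotient r ↪ ℝ) := by
        rw [← Cardinal.lift_mk_le']
        rw [Cardinal.mk_real, Cardinal.lift_continuum, Cardinal.lift_uzero]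
        exact hQ
      obtain ⟨ψ⟩ := hcard
      -- the separating bounded left-uniformly continuous function
      let f : ↥(Set.univ : Set G) → ℝ := fun x => Real.arctan (ψ (Quotient.mk r (x : G)))
      have hbound : ∃ M : ℝ, ∀ x : ↥(Set.univ : Set G), |f x| ≤ M := by
        refine ⟨Real.pi / 2, fun x => (abs_lt.mpr ⟨?_, ?_⟩).le⟩
        · exact Real.neg_pi_div_two_lt_arctan _
        · exact Real.arctan_lt_pi_div_two _
      have hLUC : UCOn (leftUnif G) Set.univ f := by
        intro e he
        refine ⟨(fun p : G × G => p.1⁻¹ * p.2) ⁻¹' H, Filter.preimage_mem_comap hHnhds,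
          fun x y hxy => ?_⟩
        have : Quotient.mk r (x : G) = Quotient.mk r (y : G) := Quotient.sound hxy
        simp only [f, this, sub_self, abs_zero]
        exact he
      have hRUC := hFB f hbound hLUC
      choose δ hδmem hδ using fun n : ℕ => hRUC (1 / (n + 1)) (by positivity)
      choose W hW hWδ using fun n => Filter.mem_comap.mp (hδmem n)
      choose O hOsub hOopen hO1 using fun n => mem_nhds_iff.mp (hW n)
      have hVopen : IsOpen (⋂ n, O n) := hP O hOopen
      have hV1 : (1 : G) ∈ ⋂ n, O n := Set.mem_iInter.mpr hO1
      have key : ∀ x v : G, v ∈ (⋂ n, O n) → Quotient.mk r (v * x) = Quotient.mk r x := by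
        intro x v hv
        have hfeq : f ⟨v * x, Set.mem_univ _⟩ = f ⟨x, Set.mem_univ _⟩ := by
          have hlt : ∀ n : ℕ,
              |f ⟨v * x, Set.mem_univ _⟩ - f ⟨x, Set.mem_univ _⟩| < 1 / (n + 1) := by
            intro n
            refine hδ n ⟨v * x, Set.mem_univ _⟩ ⟨x, Set.mem_univ _⟩ (hWδ n ?_)
            show (v * x) * x⁻¹ ∈ W n
            rw [mul_inv_cancel_right]
            exact hOsub n (Set.mem_iInter.mp hv n)
          have := eq_zero_of_abs_lt_one_div _ hlt
          linarith
        have := Real.arctan_injective hfeq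
        exact ψ.injective this
      refine Filter.mem_comap.mpr ⟨⋂ n, O n, hVopen.mem_nhds hV1, ?_⟩
      intro p hp
      have hq := key p.1 (p.1 * p.2⁻¹) hp
      have hr : (p.1 * p.2⁻¹ * p.1)⁻¹ * p.1 ∈ H := Quotient.exact hq
      have : p.1⁻¹ * p.2 ∈ H := by
        have heq : (p.1 * p.2⁻¹ * p.1)⁻¹ * p.1 = p.1⁻¹ * p.2 := by group
        rwa [heq] at hr
      exact hUs (hHU this)
    have h1 : rightUnif G ≤ leftUnif G := fun s hs => main s hs
    have e1 : leftUnif G = Filter.comap (fun p : G × G => (p.1⁻¹, p.2⁻¹)) (rightUnif G) := by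
      unfold leftUnif rightUnif
      rw [Filter.comap_comap]
      congr 1
      funext p
      simp [Function.comp]
    have e2 : rightUnif G = Filter.comap (fun p : G × G => (p.1⁻¹, p.2⁻¹)) (leftUnif G) := by
      unfold leftUnif rightUnif
      rw [Filter.comap_comap]
      congr 1
      funext p
      simp [Function.comp]
    have h2 : leftUnif G ≤ rightUnif G := by
      calc leftUnif G = _ := e1
        _ ≤ Filter.comap (fun p : G × G => (p.1⁻¹, p.2⁻¹)) (leftUnif G) := Filter.comap_mono h1
        _ = rightUnif G := e2.symm
    exact le_antisymm h2 h1
end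

section
/- Let G be a topological group carrying a P-group topology on a free group F(X), let μ be its left (or right, or two-sided) uniformity, and for n ∈ ℕ let Bₙ ⊆ F(X) denote the set of words of length at most n. Then a subset ε of F(X) × F(X) belongs to μ if and only if for every n ∈ ℕ the set ε ∩ (Bₙ × Bₙ) belongs to the trace of μ on Bₙ. -/
open Filter Set Topology Pointwise

universe u v

/-- for a P-group topology on a free group, a subset of the square belongs to
the left (right, two-sided) uniformity iff all its restrictions to the balls `Bₙ` belong to
the corresponding trace uniformities. -/
theorem mem_unif_iff_traces (X : Type*) [DecidableEq X]
    [TopologicalSpace (FreeGroup X)] [IsTopologicalGroup (FreeGroup X)]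
    (hP : IsPSpace (FreeGroup X)) (μ : Filter (FreeGroup X × FreeGroup X))
    (hμ : μ = leftUnif (FreeGroup X) ∨ μ = rightUnif (FreeGroup X) ∨
      μ = twoSidedUnif (FreeGroup X))
    (ε : Set (FreeGroup X × FreeGroup X)) :
    ε ∈ μ ↔ ∀ n : ℕ, MemTrace μ (Bword X n) (ε ∩ (Bword X n) ×ˢ (Bword X n)) := by
  constructor
  · intro hε n
    exact ⟨ε, hε, by rw [Set.inter_assoc, Set.inter_self]⟩
  · intro h
    choose δ hδμ hδ using h
    -- nhds of 1 is closed under countable intersections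
    have hnhds : ∀ s : ℕ → Set (FreeGroup X), (∀ n, s n ∈ nhds (1 : FreeGroup X)) →
        (⋂ n, s n) ∈ nhds (1 : FreeGroup X) := by
      intro s hs
      choose u hsub hopen hmem using fun n => mem_nhds_iff.1 (hs n)
      exact mem_nhds_iff.2 ⟨⋂ n, u n, Set.iInter_mono hsub, hP u hopen, Set.mem_iInter.2 hmem⟩
    have hcomap : ∀ (f : FreeGroup X × FreeGroup X → FreeGroup X)
        (s : ℕ → Set (FreeGroup X × FreeGroup X)),
        (∀ n, s n ∈ Filter.comap f (nhds 1)) → (⋂ n, s n) ∈ Filter.comap f (nhds 1) := by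
      intro f s hs
      choose t ht hsub using fun n => Filter.mem_comap.1 (hs n)
      refine Filter.mem_comap.2 ⟨⋂ n, t n, hnhds t ht, ?_⟩
      rw [Set.preimage_iInter]
      exact Set.iInter_mono hsub
    have hcl : ∀ s : ℕ → Set (FreeGroup X × FreeGroup X), (∀ n, s n ∈ μ) →
        (⋂ n, s n) ∈ μ := by
      rcases hμ with rfl | rfl | rfl
      · exact hcomap _
      · exact hcomap _
      · intro s hs
        choose a ha b hb heq using fun n => Filter.mem_inf_iff.1 (hs n)
        have : (⋂ n, s n) = (⋂ n, a n) ∩ ⋂ n, b n := by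
          rw [← Set.iInter_inter_distrib]
          exact Set.iInter_congr heq
        rw [this]
        exact Filter.inter_mem_inf (hcomap _ _ ha) (hcomap _ _ hb)
    refine Filter.mem_of_superset (hcl δ hδμ) ?_
    intro p hp
    set n := max p.1.toWord.length p.2.toWord.length with hn
    have hpB : p ∈ (Bword X n) ×ˢ (Bword X n) := by
      constructor
      · show p.1.toWord.length ≤ n
        exact le_max_left _ _
      · show p.2.toWord.length ≤ n
        exact le_max_right _ _
    have : p ∈ δ n ∩ (Bword X n) ×ˢ (Bword X n) := ⟨Set.mem_iInter.1 hp n, hpB⟩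
    rw [hδ n] at this
    exact this.1.1
end

section
/- Let (X, U) be a uniform space and τ an infinite cardinal such that U is closed under intersections of families of at most τ entourages. Then the intersection of any family of at most τ open subsets of the uniform free topological group F(X, U) is open; in particular F(X, U) is a P-group. -/
open Filter Set Topology Pointwise

universe u v

section PAux

open TopologicalSpace

variable {G : Type u}

/-- basic sets of the τ-P-modification of a topology. -/
def pBasis (T : TopologicalSpace G) (τ : Cardinal.{u}) : Set (Set G) :=
  {B | ∃ (ι : Type u) (U : ι → Set G), Cardinal.mk ι ≤ τ ∧ (∀ i, IsOpen[T] (U i)) ∧ B = ⋂ i, U i}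

/-- the τ-P-modification of a topology. -/
def pMod (T : TopologicalSpace G) (τ : Cardinal.{u}) : TopologicalSpace G :=
  TopologicalSpace.generateFrom (pBasis T τ)

theorem mem_pBasis_iInter (T : TopologicalSpace G) {τ : Cardinal.{u}} {ι : Type u}
    {U : ι → Set G} (hι : Cardinal.mk ι ≤ τ) (hO : ∀ i, IsOpen[T] (U i)) :
    (⋂ i, U i) ∈ pBasis T τ :=
  ⟨ι, U, hι, hO, rfl⟩

theorem mem_pBasis_of_isOpen (T : TopologicalSpace G) {τ : Cardinal.{u}}
    (hτ : Cardinal.aleph0 ≤ τ) {U : Set G} (hO : IsOpen[T] U) : U ∈ pBasis T τ := by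
  refine ⟨PUnit, fun _ => U, ?_, fun _ => hO, (Set.iInter_const U).symm⟩
  simpa using (Cardinal.one_le_aleph0.trans hτ)

theorem pBasis_isOpen (T : TopologicalSpace G) {τ : Cardinal.{u}} {B : Set G}
    (hB : B ∈ pBasis T τ) : IsOpen[pMod T τ] B :=
  TopologicalSpace.GenerateOpen.basic _ hB

theorem pBasis_isBasis (T : TopologicalSpace G) {τ : Cardinal.{u}}
    (hτ : Cardinal.aleph0 ≤ τ) :
    IsTopologicalBasis (t := pMod T τ) (pBasis T τ) := by
  refine @TopologicalSpace.IsTopologicalBasis.mk G (pMod T τ) _ ?_ ?_ rfl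
  · rintro B1 ⟨ι1, U1, h1, hO1, rfl⟩ B2 ⟨ι2, U2, h2, hO2, rfl⟩ x hx
    refine ⟨(⋂ i, U1 i) ∩ ⋂ i, U2 i, ⟨ι1 ⊕ ι2, Sum.elim U1 U2, ?_, ?_, ?_⟩, hx, subset_rfl⟩
    · rw [Cardinal.mk_sum, Cardinal.lift_id, Cardinal.lift_id]
      exact Cardinal.add_le_of_le hτ h1 h2
    · rintro (i | i)
      · exact hO1 i
      · exact hO2 i
    · exact (Set.iInter_sum (s := Sum.elim U1 U2)).symm
  · apply Set.eq_univ_of_univ_subset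
    intro x _
    refine ⟨univ, ⟨PEmpty, fun i => i.elim, ?_, fun i => i.elim, by simp⟩, trivial⟩
    simp

theorem pMod_topGroup [Group G] (T : TopologicalSpace G) (hG : @IsTopologicalGroup G T _)
    {τ : Cardinal.{u}} (hτ : Cardinal.aleph0 ≤ τ) :
    @IsTopologicalGroup G (pMod T τ) _ := by
  have hTinv : Continuous[T, T] (fun x : G => x⁻¹) :=
    @ContinuousInv.continuous_inv G T _ hG.toContinuousInv
  have hTmul : Continuous[@instTopologicalSpaceProd G G T T, T]
      (fun p : G × G => p.1 * p.2) :=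
    @ContinuousMul.continuous_mul G T _ hG.toContinuousMul
  have hinv : Continuous[pMod T τ, pMod T τ] (fun x : G => x⁻¹) := by
    rw [pMod, continuous_generateFrom_iff]
    rintro B ⟨ι, U, hι, hO, rfl⟩
    rw [show (fun x : G => x⁻¹) ⁻¹' ⋂ i, U i = ⋂ i, (fun x : G => x⁻¹) ⁻¹' U i from
      Set.preimage_iInter]
    exact pBasis_isOpen T (mem_pBasis_iInter T hι fun i =>
      @IsOpen.preimage G G T T _ hTinv _ (hO i))
  have hmul : Continuous[@instTopologicalSpaceProd G G (pMod T τ) (pMod T τ), pMod T τ]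
      (fun p : G × G => p.1 * p.2) := by
    rw [pMod, continuous_generateFrom_iff]
    rintro B ⟨ι, U, hι, hO, rfl⟩
    rw [@isOpen_prod_iff G G (TopologicalSpace.generateFrom (pBasis T τ))
      (TopologicalSpace.generateFrom (pBasis T τ))]
    intro a b hab
    rw [Set.mem_preimage, Set.mem_iInter] at hab
    have key : ∀ i : ι, ∃ u v : Set G, IsOpen[T] u ∧ IsOpen[T] v ∧ a ∈ u ∧ b ∈ v ∧
        u ×ˢ v ⊆ (fun p : G × G => p.1 * p.2) ⁻¹' U i := by
      intro i
      have hopen : IsOpen[@instTopologicalSpaceProd G G T T]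
          ((fun p : G × G => p.1 * p.2) ⁻¹' U i) :=
        @IsOpen.preimage (G × G) G (@instTopologicalSpaceProd G G T T) T _ hTmul _ (hO i)
      exact (@isOpen_prod_iff G G T T _).1 hopen a b (hab i)
    choose u v hu hv hau hbv huv using key
    refine ⟨⋂ i, u i, ⋂ i, v i,
      pBasis_isOpen T (mem_pBasis_iInter T hι hu),
      pBasis_isOpen T (mem_pBasis_iInter T hι hv),
      Set.mem_iInter.2 hau, Set.mem_iInter.2 hbv, ?_⟩
    intro p hp
    rw [Set.mem_prod, Set.mem_iInter, Set.mem_iInter] at hp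
    rw [Set.mem_preimage, Set.mem_iInter]
    exact fun i => huv i ⟨hp.1 i, hp.2 i⟩
  exact @IsTopologicalGroup.mk G (pMod T τ) _
    (@ContinuousMul.mk G (pMod T τ) _ hmul) (@ContinuousInv.mk G (pMod T τ) _ hinv)

end PAux

/-- if the uniformity of `X` is closed under τ-fold intersections, then so are
the open sets of the uniform free topological group `F(X, U)`; in particular it is a
P-group. -/
theorem uniformFree_tau_intersections (X : Type u) [UniformSpace X]
    [TopologicalSpace (FreeGroup X)] [IsTopologicalGroup (FreeGroup X)]
    (hF : IsUniformFreeTopGroup X) (τ : Cardinal.{u}) (hτ : Cardinal.aleph0 ≤ τ)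
    (hU : ∀ (ι : Type u) (s : ι → Set (X × X)), Cardinal.mk ι ≤ τ →
      (∀ i, s i ∈ uniformity X) → (⋂ i, s i) ∈ uniformity X) :
    (∀ (ι : Type u) (s : ι → Set (FreeGroup X)), Cardinal.mk ι ≤ τ →
      (∀ i, IsOpen (s i)) → IsOpen (⋂ i, s i)) ∧ IsPSpace (FreeGroup X) := by
  classical
  -- abbreviations
  set T : TopologicalSpace (FreeGroup X) := ‹TopologicalSpace (FreeGroup X)› with hT
  have hτG := pMod_topGroup T ‹IsTopologicalGroup (FreeGroup X)› hτ
  -- uniform continuity of `of` into the pMod topology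
  have hbasis := pBasis_isBasis T hτ
  have htend : Filter.Tendsto (Prod.map (FreeGroup.of : X → FreeGroup X) FreeGroup.of)
      (uniformity X) (@twoSidedUnif (FreeGroup X) _ (pMod T τ)) := by
    have h1 : Filter.Tendsto (fun p : X × X => (FreeGroup.of p.1)⁻¹ * FreeGroup.of p.2)
        (uniformity X) (@nhds (FreeGroup X) T 1) := by
      have := hF.1.mono_right (inf_le_left : twoSidedUnif (FreeGroup X) ≤ leftUnif (FreeGroup X))
      rw [leftUnif, Filter.tendsto_comap_iff] at this
      exact this
    have h2 : Filter.Tendsto (fun p : X × X => FreeGroup.of p.1 * (FreeGroup.of p.2)⁻¹)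
        (uniformity X) (@nhds (FreeGroup X) T 1) := by
      have := hF.1.mono_right (inf_le_right : twoSidedUnif (FreeGroup X) ≤ rightUnif (FreeGroup X))
      rw [rightUnif, Filter.tendsto_comap_iff] at this
      exact this
    have hnhds : ∀ (f : X × X → FreeGroup X),
        Filter.Tendsto f (uniformity X) (@nhds (FreeGroup X) T 1) →
        Filter.Tendsto f (uniformity X) (@nhds (FreeGroup X) (pMod T τ) 1) := by
      intro f hf N hN
      obtain ⟨B, ⟨ι, U, hι, hO, rfl⟩, h1B, hBN⟩ :=
        (@TopologicalSpace.IsTopologicalBasis.mem_nhds_iff (FreeGroup X) (pMod T τ) 1 N _ hbasis).1 hN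
      refine Filter.mem_of_superset ?_ (fun p hp => hBN hp)
      have : f ⁻¹' ⋂ i, U i = ⋂ i, f ⁻¹' U i := by simp [Set.preimage_iInter]
      rw [Filter.mem_map, this]
      refine hU ι _ hι fun i => ?_
      exact hf ((hO i).mem_nhds (Set.mem_iInter.1 h1B i))
    rw [twoSidedUnif]
    refine Filter.tendsto_inf.2 ⟨?_, ?_⟩
    · rw [leftUnif, Filter.tendsto_comap_iff]
      exact hnhds _ h1
    · rw [rightUnif, Filter.tendsto_comap_iff]
      exact hnhds _ h2
  -- universal property with G = (FreeGroup X, pMod T τ)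
  have h2 := hF.2
  have hcont : Continuous[T, pMod T τ] ⇑(FreeGroup.lift (FreeGroup.of : X → FreeGroup X)) :=
    @h2 (FreeGroup X) _ (pMod T τ) hτG FreeGroup.of htend
  have hid : ⇑(FreeGroup.lift (FreeGroup.of : X → FreeGroup X)) = id := by
    funext w
    exact DFunLike.congr_fun (FreeGroup.lift_of_eq_id X) w
  rw [hid] at hcont
  have hle : ∀ B : Set (FreeGroup X), IsOpen[pMod T τ] B → IsOpen[T] B := by
    intro B hB
    have := @IsOpen.preimage (FreeGroup X) (FreeGroup X) T (pMod T τ) id hcont B hB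
    simpa using this
  have main : ∀ (ι : Type u) (s : ι → Set (FreeGroup X)), Cardinal.mk ι ≤ τ →
      (∀ i, IsOpen (s i)) → IsOpen (⋂ i, s i) := by
    intro ι s hι hs
    exact hle _ (pBasis_isOpen T (mem_pBasis_iInter T hι hs))
  refine ⟨main, ?_⟩
  intro s hs
  have : ⋂ n, s n = ⋂ i : ULift.{u} ℕ, s i.down := by
    ext x; simp [ULift.forall]
  rw [this]
  refine main (ULift.{u} ℕ) (fun i => s i.down) ?_ (fun i => hs i.down)
  simpa using hτ
end

section
/- Let (X, U) be a uniform P-space that is ℵ₀-narrow. Then the uniform free topological group F(X, U) has a base at the identity consisting of open normal subgroups; in particular it is balanced and coincides with the free non-archimedean balanced group over (X, U). -/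
open Filter Set Topology Pointwise

universe u v

/-! ### Auxiliary lemmas -/

section AuxChain

variable {G : Type*} [Group G] [TopologicalSpace G] [IsTopologicalGroup G]

private lemma exists_symm_triple (U : Set G) (hU : U ∈ nhds (1 : G)) :
    ∃ V : Set G, V ∈ nhds (1 : G) ∧ (∀ v ∈ V, v⁻¹ ∈ V) ∧
      (∀ a ∈ V, ∀ b ∈ V, ∀ c ∈ V, a * b * c ∈ U) := by
  obtain ⟨V₀, hV₀, h4⟩ := exists_nhds_one_split4 hU
  refine ⟨V₀ ∩ V₀⁻¹, Filter.inter_mem hV₀ (inv_mem_nhds_one G hV₀), ?_, ?_⟩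
  · rintro v ⟨h1, h2⟩
    exact ⟨Set.mem_inv.mp h2, Set.mem_inv.mpr (by simpa using h1)⟩
  · rintro a ⟨ha, -⟩ b ⟨hb, -⟩ c ⟨hc, -⟩
    have := h4 ha hb hc (mem_of_mem_nhds hV₀)
    simpa using this

/-- A chain of symmetric neighborhoods of `1` with triple products decreasing. -/
private lemma exists_nhds_chain (W : Set G) (hW : W ∈ nhds (1 : G)) :
    ∃ V : ℕ → Set G, (V 0 ⊆ W) ∧ (∀ n, V n ∈ nhds (1 : G)) ∧
      (∀ n, ∀ v ∈ V n, v⁻¹ ∈ V n) ∧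
      (∀ n, ∀ a ∈ V (n+1), ∀ b ∈ V (n+1), ∀ c ∈ V (n+1), a * b * c ∈ V n) := by
  have key : ∀ U : Set G, U ∈ nhds (1 : G) → ∃ V : Set G, V ∈ nhds (1 : G) ∧
      (∀ v ∈ V, v⁻¹ ∈ V) ∧ (∀ a ∈ V, ∀ b ∈ V, ∀ c ∈ V, a * b * c ∈ U) :=
    exists_symm_triple
  choose! step h1 h2 h3 using key
  refine ⟨fun n => Nat.rec (motive := fun _ => Set G) (step W) (fun _ prev => step prev) n,
    ?_, ?_, ?_, ?_⟩
  case refine_2 =>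
    intro n
    induction n with
    | zero => exact h1 W hW
    | succ n ih => exact h1 _ ih
  case refine_1 =>
    intro a ha
    have h1W := h1 W hW
    have := h3 W hW a ha 1 (mem_of_mem_nhds h1W) 1 (mem_of_mem_nhds h1W)
    simpa using this
  case refine_3 =>
    intro n
    induction n with
    | zero => exact h2 W hW
    | succ n ih =>
      exact h2 _ (by
        clear ih
        induction n with
        | zero => exact h1 W hW
        | succ m ih2 => exact h1 _ ih2)
  case refine_4 =>
    intro n
    apply h3
    induction n with
    | zero => exact h1 W hW
    | succ m ih => exact h1 _ ih

end AuxChain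

section AuxNarrow
set_option linter.unusedSectionVars false

variable {X : Type u} [UniformSpace X] [TopologicalSpace (FreeGroup X)]
  [IsTopologicalGroup (FreeGroup X)]

/-- The set of letters of the free group. -/
private def Letters (X : Type u) : Set (FreeGroup X) :=
  Set.range (FreeGroup.of : X → FreeGroup X) ∪
    (Set.range (FreeGroup.of : X → FreeGroup X))⁻¹ ∪ {1}

private lemma letters_inv : (Letters X)⁻¹ = Letters X := by
  simp only [Letters, Set.union_assoc]
  rw [Set.union_inv, Set.union_inv, inv_inv, Set.inv_singleton, inv_one]
  simp [Set.union_comm, Set.union_assoc, Set.union_left_comm, Set.insert_union, Set.union_insert]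

private lemma mem_pow_letters (g : FreeGroup X) : ∃ n : ℕ, g ∈ (Letters X) ^ n := by
  have hg : g ∈ Subgroup.closure (Set.range (FreeGroup.of : X → FreeGroup X)) := by
    rw [FreeGroup.closure_range_of]; trivial
  refine Subgroup.closure_induction (fun x hx => ?_) ⟨0, by simp [pow_zero]⟩
    (fun x y _ _ ⟨n, hn⟩ ⟨m, hm⟩ => ⟨n + m, by rw [pow_add]; exact Set.mul_mem_mul hn hm⟩)
    (fun x _ ⟨n, hn⟩ => ⟨n, ?_⟩) hg
  · exact ⟨1, by rw [pow_one]; exact Or.inl (Or.inl hx)⟩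
  · rw [← letters_inv, inv_pow]
    exact Set.inv_mem_inv.mpr hn

/-- `ℵ₀`-narrowness of the letters with respect to right cosets. -/
private lemma narrow_letters
    (hnarrow : ∀ ε ∈ uniformity X, ∃ f : ℕ → X, ∀ x : X, ∃ n : ℕ, (f n, x) ∈ ε)
    (huc : Filter.Tendsto (Prod.map (FreeGroup.of : X → FreeGroup X) FreeGroup.of)
      (uniformity X) (twoSidedUnif (FreeGroup X)))
    (V : Set (FreeGroup X)) (hV : V ∈ nhds (1 : FreeGroup X)) :
    ∃ A : Set (FreeGroup X), A.Countable ∧ (1 ∈ A) ∧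
      ∀ g ∈ Letters X, ∃ v ∈ V, ∃ a ∈ A, g = v * a := by
  classical
  have hVsmem : V ∩ V⁻¹ ∈ nhds (1 : FreeGroup X) :=
    Filter.inter_mem hV (inv_mem_nhds_one _ hV)
  have h1 : {p : FreeGroup X × FreeGroup X | p.1⁻¹ * p.2 ∈ V ∩ V⁻¹} ∈ leftUnif (FreeGroup X) :=
    Filter.preimage_mem_comap hVsmem
  have h2 : {p : FreeGroup X × FreeGroup X | p.1 * p.2⁻¹ ∈ V ∩ V⁻¹} ∈ rightUnif (FreeGroup X) :=
    Filter.preimage_mem_comap hVsmem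
  have hε : (Prod.map (FreeGroup.of : X → FreeGroup X) FreeGroup.of) ⁻¹'
      ({p : FreeGroup X × FreeGroup X | p.1⁻¹ * p.2 ∈ V ∩ V⁻¹} ∩
        {p : FreeGroup X × FreeGroup X | p.1 * p.2⁻¹ ∈ V ∩ V⁻¹}) ∈ uniformity X :=
    Filter.mem_map.mp (huc (Filter.inter_mem_inf h1 h2))
  obtain ⟨f, hf⟩ := hnarrow _ hε
  refine ⟨insert 1 (Set.range (fun k => FreeGroup.of (f k)) ∪
      Set.range (fun k => (FreeGroup.of (f k))⁻¹)),
    (((Set.countable_range _).union (Set.countable_range _)).insert 1),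
    Set.mem_insert _ _, ?_⟩
  rintro g ((⟨x, rfl⟩ | hginv) | rfl)
  · obtain ⟨k, hk⟩ := hf x
    have hR : FreeGroup.of (f k) * (FreeGroup.of x)⁻¹ ∈ V ∩ V⁻¹ := hk.2
    refine ⟨FreeGroup.of x * (FreeGroup.of (f k))⁻¹, ?_, FreeGroup.of (f k),
      Set.mem_insert_iff.mpr (Or.inr (Or.inl ⟨k, rfl⟩)), by group⟩
    have := Set.mem_inv.mp hR.2
    simpa [mul_inv_rev] using this
  · rw [Set.mem_inv] at hginv
    obtain ⟨x, hx⟩ := hginv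
    have hg : g = (FreeGroup.of x)⁻¹ := by rw [hx, inv_inv]
    subst hg
    obtain ⟨k, hk⟩ := hf x
    have hL : (FreeGroup.of (f k))⁻¹ * FreeGroup.of x ∈ V ∩ V⁻¹ := hk.1
    refine ⟨(FreeGroup.of x)⁻¹ * FreeGroup.of (f k), ?_, (FreeGroup.of (f k))⁻¹,
      Set.mem_insert_iff.mpr (Or.inr (Or.inr ⟨k, rfl⟩)), by group⟩
    have := Set.mem_inv.mp hL.2
    simpa [mul_inv_rev] using this
  · exact ⟨1, mem_of_mem_nhds hV, 1, Set.mem_insert _ _, by simp⟩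

/-- Guran's lemma: the free group over an `ℵ₀`-narrow uniform space is `ℵ₀`-narrow
(with respect to right cosets). -/
private lemma narrow_group
    (hnarrow : ∀ ε ∈ uniformity X, ∃ f : ℕ → X, ∀ x : X, ∃ n : ℕ, (f n, x) ∈ ε)
    (huc : Filter.Tendsto (Prod.map (FreeGroup.of : X → FreeGroup X) FreeGroup.of)
      (uniformity X) (twoSidedUnif (FreeGroup X)))
    (V : Set (FreeGroup X)) (hV : V ∈ nhds (1 : FreeGroup X)) :
    ∃ C : Set (FreeGroup X), C.Countable ∧
      ∀ g : FreeGroup X, ∃ v ∈ V, ∃ c ∈ C, g = v * c := by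
  classical
  have B3 : ∀ n : ℕ, ∀ U ∈ nhds (1 : FreeGroup X), ∃ B : Set (FreeGroup X), B.Countable ∧
      ∀ g ∈ (Letters X) ^ n, ∃ v ∈ U, ∃ b ∈ B, g = v * b := by
    intro n
    induction n with
    | zero =>
      intro U hU
      refine ⟨{1}, Set.countable_singleton 1, fun g hg => ?_⟩
      rw [pow_zero] at hg
      exact ⟨1, mem_of_mem_nhds hU, 1, rfl, by simpa using hg⟩
    | succ n ih =>
      intro U hU
      obtain ⟨U₁, hU₁, hsplit⟩ := exists_nhds_one_split hU
      obtain ⟨B, hBc, hB⟩ := ih U₁ hU₁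
      have hWb : ∀ b : FreeGroup X, ((fun z => b * z * b⁻¹) ⁻¹' U₁) ∈ nhds (1 : FreeGroup X) := by
        intro b
        have hcont : Continuous (fun z : FreeGroup X => b * z * b⁻¹) :=
          (continuous_const.mul continuous_id).mul continuous_const
        have h1 : (fun z : FreeGroup X => b * z * b⁻¹) 1 = 1 := by group
        have := hcont.continuousAt (x := (1 : FreeGroup X))
        exact this.preimage_mem_nhds (by simpa using hU₁)
      have hA : ∀ b : FreeGroup X, ∃ A : Set (FreeGroup X), A.Countable ∧ (1 ∈ A) ∧
          ∀ g ∈ Letters X, ∃ v ∈ ((fun z => b * z * b⁻¹) ⁻¹' U₁), ∃ a ∈ A, g = v * a :=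
        fun b => narrow_letters hnarrow huc _ (hWb b)
      choose A hAc hA1 hAcov using hA
      refine ⟨⋃ b ∈ B, (fun a => b * a) '' A b,
        hBc.biUnion (fun b _ => (hAc b).image _), ?_⟩
      intro g hg
      rw [pow_succ] at hg
      obtain ⟨h, hh, y, hy, rfl⟩ := hg
      obtain ⟨v₁, hv₁, b, hb, rfl⟩ := hB h hh
      obtain ⟨w, hw, a, ha, rfl⟩ := hAcov b y hy
      refine ⟨v₁ * (b * w * b⁻¹), hsplit _ hv₁ _ hw, b * a, ?_, by group⟩
      exact Set.mem_biUnion hb ⟨a, ha, rfl⟩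
  choose B hBc hB using fun n => B3 n V hV
  refine ⟨⋃ n, B n, Set.countable_iUnion hBc, fun g => ?_⟩
  obtain ⟨n, hn⟩ := mem_pow_letters g
  obtain ⟨v, hv, b, hb, rfl⟩ := hB n _ hn
  exact ⟨v, hv, b, Set.mem_iUnion.mpr ⟨n, hb⟩, rfl⟩

end AuxNarrow

section AuxKer

/-- The kernel of the induced map to the free group on a quotient is contained in the
normal closure of the elementary relators. -/
private lemma ker_le_normalClosure {X : Type u} (st : Setoid X) (w : FreeGroup X)
    (hw : FreeGroup.map (Quotient.mk st) w = 1) :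
    w ∈ Subgroup.normalClosure
      {z : FreeGroup X | ∃ x y, st.r x y ∧ z = (FreeGroup.of x)⁻¹ * FreeGroup.of y} := by
  set N : Subgroup (FreeGroup X) := Subgroup.normalClosure
      {z : FreeGroup X | ∃ x y, st.r x y ∧ z = (FreeGroup.of x)⁻¹ * FreeGroup.of y} with hNdef
  haveI : N.Normal := Subgroup.normalClosure_normal
  have hresp : ∀ a b : X, a ≈ b →
      ((FreeGroup.of a : FreeGroup X) : FreeGroup X ⧸ N) = ((FreeGroup.of b : FreeGroup X)) := by
    intro a b hab
    rw [QuotientGroup.eq]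
    exact Subgroup.subset_normalClosure ⟨a, b, hab, rfl⟩
  let σ : FreeGroup (Quotient st) →* FreeGroup X ⧸ N :=
    FreeGroup.lift (Quotient.lift
      (fun x => ((FreeGroup.of x : FreeGroup X) : FreeGroup X ⧸ N)) hresp)
  have key : σ.comp (FreeGroup.map (Quotient.mk st)) = QuotientGroup.mk' N := by
    apply FreeGroup.ext_hom
    intro a
    simp only [MonoidHom.comp_apply, FreeGroup.map.of, QuotientGroup.mk'_apply, σ,
      FreeGroup.lift_apply_of]
    rfl
  have hcw := DFunLike.congr_fun key w
  rw [MonoidHom.comp_apply, hw, map_one, QuotientGroup.mk'_apply] at hcw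
  exact (QuotientGroup.eq_one_iff w).mp hcw.symm

end AuxKer

/-- over an ℵ₀-narrow uniform P-space, the uniform free topological group
has a base at the identity of open normal subgroups; in particular it is balanced and
coincides with the free non-archimedean balanced group. -/
theorem uniformFree_narrow_pSpace (X : Type u) [UniformSpace X]
    [TopologicalSpace (FreeGroup X)] [IsTopologicalGroup (FreeGroup X)]
    (hP : IsUniformPSpace X)
    (hnarrow : ∀ ε ∈ uniformity X, ∃ f : ℕ → X, ∀ x : X, ∃ n : ℕ, (f n, x) ∈ ε)
    (hF : IsUniformFreeTopGroup X) :
    (∀ W ∈ nhds (1 : FreeGroup X), ∃ H : Subgroup (FreeGroup X), H.Normal ∧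
      IsOpen (H : Set (FreeGroup X)) ∧ (H : Set (FreeGroup X)) ⊆ W) ∧
    leftUnif (FreeGroup X) = rightUnif (FreeGroup X) ∧
    IsFreeNABalancedGroup X := by
  classical
  -- The core claim : base of open normal subgroups at the identity.
  have core : ∀ W ∈ nhds (1 : FreeGroup X), ∃ H : Subgroup (FreeGroup X), H.Normal ∧
      IsOpen (H : Set (FreeGroup X)) ∧ (H : Set (FreeGroup X)) ⊆ W := by
    intro W hW
    obtain ⟨V, hV0, hVmem, hVsym, hVtriple⟩ := exists_nhds_chain W hW
    -- countable covers for each `V j`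
    have hcov := fun j => narrow_group hnarrow hF.1 (V j) (hVmem j)
    choose C hCc hCcov using hcov
    obtain ⟨fC, hfC⟩ := ((Set.countable_iUnion hCc).insert 1).exists_eq_range
      (Set.insert_nonempty _ _)
    have cover : ∀ (g : FreeGroup X) (j : ℕ), ∃ i, ∃ v ∈ V (j + 1), g = v * fC i := by
      intro g j
      obtain ⟨v, hv, c, hc, rfl⟩ := hCcov (j + 1) g
      have : c ∈ insert 1 (⋃ j, C j) := Set.mem_insert_iff.mpr
        (Or.inr (Set.mem_iUnion.mpr ⟨j + 1, hc⟩))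
      rw [hfC] at this
      obtain ⟨i, rfl⟩ := this
      exact ⟨i, v, hv, rfl⟩
    -- the basic entourages coming from conjugated uniform continuity
    set ent : ℕ → ℕ → Set (X × X) := fun i j =>
      {p : X × X | fC i * ((FreeGroup.of p.1)⁻¹ * FreeGroup.of p.2) * (fC i)⁻¹ ∈ V j ∧
        fC i * (FreeGroup.of p.1 * (FreeGroup.of p.2)⁻¹) * (fC i)⁻¹ ∈ V j} with hent_def
    have hent : ∀ i j, ent i j ∈ uniformity X := by
      intro i j
      have hcont : Continuous (fun z : FreeGroup X => fC i * z * (fC i)⁻¹) :=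
        (continuous_const.mul continuous_id).mul continuous_const
      have hpre : (fun z : FreeGroup X => fC i * z * (fC i)⁻¹) ⁻¹' (V j)
          ∈ nhds (1 : FreeGroup X) :=
        (hcont.continuousAt (x := (1 : FreeGroup X))).preimage_mem_nhds
          (by simpa using hVmem j)
      have hL : {p : FreeGroup X × FreeGroup X |
          fC i * (p.1⁻¹ * p.2) * (fC i)⁻¹ ∈ V j} ∈ leftUnif (FreeGroup X) :=
        Filter.preimage_mem_comap hpre
      have hR : {p : FreeGroup X × FreeGroup X |
          fC i * (p.1 * p.2⁻¹) * (fC i)⁻¹ ∈ V j} ∈ rightUnif (FreeGroup X) :=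
        Filter.preimage_mem_comap hpre
      have := Filter.mem_map.mp (hF.1 (Filter.inter_mem_inf hL hR))
      apply Filter.mem_of_superset this
      rintro ⟨x, y⟩ ⟨h1, h2⟩
      exact ⟨h1, h2⟩
    -- intersect all of them (uniform P-space)
    set εinf : Set (X × X) := ⋂ n : ℕ, ent (Nat.unpair n).1 (Nat.unpair n).2 with hεinf_def
    have hεinf : εinf ∈ uniformity X := hP _ (fun n => hent _ _)
    have hεsub : ∀ i j, εinf ⊆ ent i j := by
      intro i j p hp
      have := Set.mem_iInter.mp hp (Nat.pair i j)
      rwa [Nat.unpair_pair] at this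
    -- a decreasing chain of symmetric entourages with composition control
    have keyδ : ∀ s : Set (X × X), (s ∈ uniformity X ∧ SetRel.IsSymm s) →
        ∃ t : Set (X × X), (t ∈ uniformity X ∧ SetRel.IsSymm t) ∧ t ⊆ s ∧
          ∀ a b c : X, (a, b) ∈ t → (b, c) ∈ t → (a, c) ∈ s := by
      rintro s ⟨hs, hssymm⟩
      obtain ⟨t, ht, htsymm, htcomp⟩ := comp_symm_mem_uniformity_sets hs
      refine ⟨t ∩ s, ⟨Filter.inter_mem ht hs, by haveI := htsymm; haveI := hssymm; infer_instance⟩,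
        Set.inter_subset_right, ?_⟩
      intro a b c hab hbc
      exact htcomp (SetRel.prodMk_mem_comp hab.1 hbc.1)
    choose! stepδ hδ1 hδ2 hδ3 using keyδ
    set δ : ℕ → Set (X × X) := fun n => Nat.rec (motive := fun _ => Set (X × X))
      (SetRel.symmetrize εinf) (fun _ prev => stepδ prev) n with hδ_def
    have hδgood : ∀ n, δ n ∈ uniformity X ∧ SetRel.IsSymm (δ n) := by
      intro n
      induction n with
      | zero => exact ⟨symmetrize_mem_uniformity hεinf, inferInstance⟩
      | succ n ih => exact hδ1 _ ih
    have hδsub : ∀ n, δ (n + 1) ⊆ δ n := fun n => hδ2 _ (hδgood n)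
    have hδcomp : ∀ n (a b c : X), (a, b) ∈ δ (n + 1) → (b, c) ∈ δ (n + 1) → (a, c) ∈ δ n :=
      fun n => hδ3 _ (hδgood n)
    set η : Set (X × X) := ⋂ n, δ n with hη_def
    have hη : η ∈ uniformity X := hP _ (fun n => (hδgood n).1)
    have hηsub0 : η ⊆ εinf :=
      (Set.iInter_subset δ 0).trans SetRel.symmetrize_subset_self
    have hηrefl : ∀ x : X, (x, x) ∈ η := fun x => refl_mem_uniformity hη
    have hηsymm : ∀ {x y : X}, (x, y) ∈ η → (y, x) ∈ η := by
      intro x y h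
      exact Set.mem_iInter.mpr fun n =>
        (by haveI := (hδgood n).2; exact SetRel.symm (δ n) (Set.mem_iInter.mp h n))
    have hηtrans : ∀ {x y z : X}, (x, y) ∈ η → (y, z) ∈ η → (x, z) ∈ η := by
      intro x y z h1 h2
      exact Set.mem_iInter.mpr fun n =>
        hδcomp n x y z (Set.mem_iInter.mp h1 (n + 1)) (Set.mem_iInter.mp h2 (n + 1))
    -- the setoid and the kernel subgroup
    set st : Setoid X := ⟨fun x y => (x, y) ∈ η,
      ⟨fun x => hηrefl x, fun h => hηsymm h, fun h1 h2 => hηtrans h1 h2⟩⟩ with hst_def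
    set N : Subgroup (FreeGroup X) := (FreeGroup.map (Quotient.mk st)).ker with hN_def
    -- discrete topological group structure on the quotient free group
    letI : TopologicalSpace (FreeGroup (Quotient st)) := ⊥
    haveI : DiscreteTopology (FreeGroup (Quotient st)) := ⟨rfl⟩
    haveI : IsTopologicalGroup (FreeGroup (Quotient st)) :=
      { continuous_mul := continuous_of_discreteTopology
        continuous_inv := continuous_of_discreteTopology }
    have hucQ : Filter.Tendsto
        (Prod.map (fun x : X => FreeGroup.of (Quotient.mk st x))
          (fun x : X => FreeGroup.of (Quotient.mk st x)))
        (uniformity X) (twoSidedUnif (FreeGroup (Quotient st))) := by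
      intro t ht
      rw [Filter.mem_map]
      rw [twoSidedUnif, Filter.mem_inf_iff] at ht
      obtain ⟨l, hl, r, hr, rfl⟩ := ht
      obtain ⟨Vl, hVl, hVlsub⟩ := Filter.mem_comap.mp hl
      obtain ⟨Vr, hVr, hVrsub⟩ := Filter.mem_comap.mp hr
      apply Filter.mem_of_superset hη
      rintro ⟨x, y⟩ hxy
      have hq : Quotient.mk st x = Quotient.mk st y := Quotient.sound hxy
      constructor
      · apply hVlsub
        show (FreeGroup.of (Quotient.mk st x))⁻¹ * FreeGroup.of (Quotient.mk st y) ∈ Vl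
        rw [hq, inv_mul_cancel]
        exact mem_of_mem_nhds hVl
      · apply hVrsub
        show FreeGroup.of (Quotient.mk st x) * (FreeGroup.of (Quotient.mk st y))⁻¹ ∈ Vr
        rw [hq, mul_inv_cancel]
        exact mem_of_mem_nhds hVr
    have hcont : Continuous ⇑(FreeGroup.lift
        (fun x : X => FreeGroup.of (Quotient.mk st x))) :=
      hF.2 (FreeGroup (Quotient st)) _ hucQ
    have hlm : ⇑(FreeGroup.lift (fun x : X => FreeGroup.of (Quotient.mk st x)))
        = ⇑(FreeGroup.map (Quotient.mk st)) := by
      funext w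
      rw [FreeGroup.map_eq_lift]
      rfl
    have hopen : IsOpen (N : Set (FreeGroup X)) := by
      have hNs : (N : Set (FreeGroup X))
          = ⇑(FreeGroup.map (Quotient.mk st)) ⁻¹' {1} := by
        ext g
        simp [hN_def, MonoidHom.mem_ker]
      rw [hNs, ← hlm]
      exact hcont.isOpen_preimage _ (isOpen_discrete _)
    -- the kernel is contained in W
    have hsubW : (N : Set (FreeGroup X)) ⊆ W := by
      intro w hw
      have hker : FreeGroup.map (Quotient.mk st) w = 1 := hw
      have hnc := ker_le_normalClosure st w hker
      -- every conjugate of an elementary relator lies in every `V j`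
      have hS_conj : ∀ a ∈ Group.conjugatesOfSet
          {z : FreeGroup X | ∃ x y, st.r x y ∧ z = (FreeGroup.of x)⁻¹ * FreeGroup.of y},
          ∀ j, a ∈ V j := by
        intro a ha j
        obtain ⟨b, hbS, hconj⟩ := Group.mem_conjugatesOfSet_iff.mp ha
        obtain ⟨x, y, hxy, rfl⟩ := hbS
        obtain ⟨g, hg⟩ := isConj_iff.mp hconj
        obtain ⟨i, v, hv, hgv⟩ := cover g j
        have hmid : fC i * ((FreeGroup.of x)⁻¹ * FreeGroup.of y) * (fC i)⁻¹ ∈ V (j + 1) :=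
          (hεsub i (j + 1) (hηsub0 hxy)).1
        have ha_eq : a = v * (fC i * ((FreeGroup.of x)⁻¹ * FreeGroup.of y) * (fC i)⁻¹) * v⁻¹ := by
          rw [← hg, hgv]; group
        rw [ha_eq]
        exact hVtriple j v hv _ hmid _ (hVsym (j + 1) v hv)
      have hall : ∀ j, w ∈ V j := by
        refine Subgroup.closure_induction (fun a ha => hS_conj a ha)
          (fun j => mem_of_mem_nhds (hVmem j)) (fun x y _ _ ihx ihy j => ?_)
          (fun x _ ihx j => hVsym j x (ihx j)) hnc
        have := hVtriple j x (ihx (j + 1)) y (ihy (j + 1)) 1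
          (mem_of_mem_nhds (hVmem (j + 1)))
        simpa using this
      exact hV0 (hall 0)
    exact ⟨N, MonoidHom.normal_ker _, hopen, hsubW⟩
  -- balancedness: the left and right uniformities coincide
  have hlr : leftUnif (FreeGroup X) = rightUnif (FreeGroup X) := by
    apply le_antisymm
    · rw [Filter.le_def]
      intro t ht
      obtain ⟨Vt, hVt, hsub⟩ := Filter.mem_comap.mp ht
      obtain ⟨H, hn, ho, hwsub⟩ := core Vt hVt
      refine Filter.mem_comap.mpr ⟨(H : Set (FreeGroup X)), ho.mem_nhds H.one_mem, ?_⟩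
      intro p hp
      apply hsub
      show p.1 * p.2⁻¹ ∈ Vt
      apply hwsub
      have : p.1 * p.2⁻¹ = p.1 * (p.1⁻¹ * p.2)⁻¹ * p.1⁻¹ := by group
      rw [this]
      exact hn.conj_mem _ (H.inv_mem hp) p.1
    · rw [Filter.le_def]
      intro t ht
      obtain ⟨Vt, hVt, hsub⟩ := Filter.mem_comap.mp ht
      obtain ⟨H, hn, ho, hwsub⟩ := core Vt hVt
      refine Filter.mem_comap.mpr ⟨(H : Set (FreeGroup X)), ho.mem_nhds H.one_mem, ?_⟩
      intro p hp
      apply hsub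
      show p.1⁻¹ * p.2 ∈ Vt
      apply hwsub
      have : p.1⁻¹ * p.2 = p.1⁻¹ * (p.1 * p.2⁻¹)⁻¹ * (p.1⁻¹)⁻¹ := by group
      rw [this]
      exact hn.conj_mem _ (H.inv_mem hp) p.1⁻¹
  refine ⟨core, hlr, ?_, hlr, hF.1, fun G _ _ _ φ _ _ h => hF.2 G φ h⟩
  intro U hU
  obtain ⟨H, _, ho, hs⟩ := core U hU
  exact ⟨H, ho, hs⟩
end

section
/- Let (X, U) be a uniform P-space and F(X, U) the uniform free topological group; let Bₙ denote the set of words of length at most n in the free group F(X). Then F(X, U) is balanced if and only if for every n ∈ ℕ the left and right uniformities of F(X, U) induce the same trace uniformity on Bₙ. -/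
open Filter Set Topology Pointwise

universe u v

/-- The countable-intersection group filter basis on a topological group. -/
def ctbleBasis (G : Type*) [Group G] [TopologicalSpace G] [IsTopologicalGroup G] :
    GroupFilterBasis G where
  sets := {s | ∃ V : ℕ → Set G, (∀ n, V n ∈ 𝓝 (1 : G)) ∧ s = ⋂ n, V n}
  nonempty := ⟨⋂ _ : ℕ, (univ : Set G), fun _ => univ, fun _ => univ_mem, rfl⟩
  inter_sets := by
    rintro s t ⟨V, hV, rfl⟩ ⟨W, hW, rfl⟩
    refine ⟨⋂ n, (V n ∩ W n), ⟨fun n => V n ∩ W n, fun n => inter_mem (hV n) (hW n), rfl⟩, ?_⟩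
    exact subset_inter (iInter_mono fun n => inter_subset_left)
      (iInter_mono fun n => inter_subset_right)
  one' := by
    rintro s ⟨V, hV, rfl⟩
    exact mem_iInter.2 fun n => mem_of_mem_nhds (hV n)
  mul' := by
    rintro s ⟨V, hV, rfl⟩
    have h : ∀ n, ∃ W ∈ 𝓝 (1 : G), ∀ v ∈ W, ∀ w ∈ W, v * w ∈ V n :=
      fun n => exists_nhds_one_split (hV n)
    choose W hW hmul using h
    refine ⟨⋂ n, W n, ⟨W, hW, rfl⟩, ?_⟩
    rw [mul_subset_iff]
    intro a ha b hb
    exact mem_iInter.2 fun n =>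
      hmul n a (mem_iInter.1 ha n) b (mem_iInter.1 hb n)
  inv' := by
    rintro s ⟨V, hV, rfl⟩
    refine ⟨⋂ n, (fun x : G => x⁻¹) ⁻¹' V n,
      ⟨_, fun n => ?_, rfl⟩, ?_⟩
    · have : ContinuousAt (fun x : G => x⁻¹) 1 := continuous_inv.continuousAt
      simpa using this.preimage_mem_nhds (by simpa using hV n)
    · rw [preimage_iInter]
  conj' := by
    intro x₀
    rintro s ⟨V, hV, rfl⟩
    refine ⟨⋂ n, (fun x : G => x₀ * x * x₀⁻¹) ⁻¹' V n, ⟨_, fun n => ?_, rfl⟩, ?_⟩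
    · have hc : ContinuousAt (fun x : G => x₀ * x * x₀⁻¹) 1 := by fun_prop
      simpa using hc.preimage_mem_nhds (by simpa using hV n)
    · rw [preimage_iInter]



theorem mem_ctbleBasis {G : Type*} [Group G] [TopologicalSpace G] [IsTopologicalGroup G]
    (s : Set G) : s ∈ ctbleBasis G ↔
      ∃ V : ℕ → Set G, (∀ n, V n ∈ 𝓝 (1 : G)) ∧ s = ⋂ n, V n :=
  Iff.rfl

/-- If `X` is a uniform P-space and `FreeGroup X` carries the uniform free topological group
topology, then `FreeGroup X` is a P-group: `𝓝 1` is closed under countable intersections. -/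
theorem freeGroup_pgroup {X : Type u} [UniformSpace X]
    [TopologicalSpace (FreeGroup X)] [IsTopologicalGroup (FreeGroup X)]
    (hP : IsUniformPSpace X) (hF : IsUniformFreeTopGroup X)
    (U : ℕ → Set (FreeGroup X)) (hU : ∀ n, U n ∈ 𝓝 (1 : FreeGroup X)) :
    (⋂ n, U n) ∈ 𝓝 (1 : FreeGroup X) := by
  let B : GroupFilterBasis (FreeGroup X) := ctbleBasis (FreeGroup X)
  -- the intersection is in the filter of the basis
  have hmemB : (⋂ n, U n) ∈ B := (mem_ctbleBasis _).2 ⟨U, hU, rfl⟩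
  -- tendsto into the two-sided uniformity of the new topology
  have hmap := hF.1
  rw [twoSidedUnif] at hmap
  have hleft : Tendsto (Prod.map (FreeGroup.of : X → FreeGroup X) FreeGroup.of) (uniformity X)
      (leftUnif (FreeGroup X)) := hmap.mono_right inf_le_left
  have hright : Tendsto (Prod.map (FreeGroup.of : X → FreeGroup X) FreeGroup.of) (uniformity X)
      (rightUnif (FreeGroup X)) := hmap.mono_right inf_le_right
  have hleft' : Tendsto ((fun p : FreeGroup X × FreeGroup X => p.1⁻¹ * p.2) ∘
      Prod.map (FreeGroup.of : X → FreeGroup X) FreeGroup.of) (uniformity X) (𝓝 1) := by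
    rw [← tendsto_comap_iff]; exact hleft
  have hright' : Tendsto ((fun p : FreeGroup X × FreeGroup X => p.1 * p.2⁻¹) ∘
      Prod.map (FreeGroup.of : X → FreeGroup X) FreeGroup.of) (uniformity X) (𝓝 1) := by
    rw [← tendsto_comap_iff]; exact hright
  have hBfilter : ∀ (f : FreeGroup X × FreeGroup X → FreeGroup X),
      Tendsto (f ∘ Prod.map (FreeGroup.of : X → FreeGroup X) FreeGroup.of) (uniformity X) (𝓝 1) →
      Tendsto (f ∘ Prod.map (FreeGroup.of : X → FreeGroup X) FreeGroup.of) (uniformity X)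
        B.toFilterBasis.filter := by
    intro f hf s hs
    rcases B.toFilterBasis.mem_filter_iff.1 hs with ⟨t, htB, hts⟩
    rcases (mem_ctbleBasis _).1 htB with ⟨V, hV, rfl⟩
    rw [mem_map]
    refine mem_of_superset ?_ (preimage_mono hts)
    rw [preimage_iInter]
    exact hP _ fun n => mem_map.1 (hf (hV n))
  have h2 : Tendsto (Prod.map (FreeGroup.of : X → FreeGroup X) FreeGroup.of) (uniformity X)
      (@twoSidedUnif (FreeGroup X) _ B.topology) := by
    rw [twoSidedUnif, tendsto_inf]
    constructor
    · rw [leftUnif, tendsto_comap_iff, B.nhds_one_eq]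
      exact hBfilter _ hleft'
    · rw [rightUnif, tendsto_comap_iff, B.nhds_one_eq]
      exact hBfilter _ hright'
  have key := hF.2
  have hcont : Continuous[_, B.topology] ⇑(FreeGroup.lift (FreeGroup.of : X → FreeGroup X)) :=
    @key (FreeGroup X) _ B.topology B.isTopologicalGroup FreeGroup.of h2
  have hid : ⇑(FreeGroup.lift (FreeGroup.of : X → FreeGroup X)) = id := by
    have : FreeGroup.lift (FreeGroup.of : X → FreeGroup X) = MonoidHom.id (FreeGroup X) :=
      FreeGroup.ext_hom _ _ fun a => by simp
    rw [this]; rfl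
  rw [hid, continuous_id_iff_le] at hcont
  have := nhds_mono (a := (1 : FreeGroup X)) hcont
  exact this (B.mem_nhds_one hmemB)

/-- Under the same hypotheses, `leftUnif (FreeGroup X)` is closed under countable
intersections. -/
theorem leftUnif_ctble {X : Type u} [UniformSpace X]
    [TopologicalSpace (FreeGroup X)] [IsTopologicalGroup (FreeGroup X)]
    (hP : IsUniformPSpace X) (hF : IsUniformFreeTopGroup X)
    (d : ℕ → Set (FreeGroup X × FreeGroup X)) (hd : ∀ n, d n ∈ leftUnif (FreeGroup X)) :
    (⋂ n, d n) ∈ leftUnif (FreeGroup X) := by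
  have h : ∀ n, ∃ W ∈ 𝓝 (1 : FreeGroup X),
      (fun p : FreeGroup X × FreeGroup X => p.1⁻¹ * p.2) ⁻¹' W ⊆ d n := fun n => (hd n)
  choose W hW hsub using h
  refine ⟨⋂ n, W n, freeGroup_pgroup hP hF W hW, ?_⟩
  rw [preimage_iInter]
  exact iInter_mono hsub

theorem rightUnif_ctble {X : Type u} [UniformSpace X]
    [TopologicalSpace (FreeGroup X)] [IsTopologicalGroup (FreeGroup X)]
    (hP : IsUniformPSpace X) (hF : IsUniformFreeTopGroup X)
    (d : ℕ → Set (FreeGroup X × FreeGroup X)) (hd : ∀ n, d n ∈ rightUnif (FreeGroup X)) :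
    (⋂ n, d n) ∈ rightUnif (FreeGroup X) := by
  have h : ∀ n, ∃ W ∈ 𝓝 (1 : FreeGroup X),
      (fun p : FreeGroup X × FreeGroup X => p.1 * p.2⁻¹) ⁻¹' W ⊆ d n := fun n => (hd n)
  choose W hW hsub using h
  refine ⟨⋂ n, W n, freeGroup_pgroup hP hF W hW, ?_⟩
  rw [preimage_iInter]
  exact iInter_mono hsub

/-- over a uniform P-space, the uniform free topological group is balanced iff
the left and right uniformities induce the same trace on each ball `Bₙ`. -/
theorem uniformFree_balanced_iff_traces (X : Type u) [UniformSpace X] [DecidableEq X]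
    [TopologicalSpace (FreeGroup X)] [IsTopologicalGroup (FreeGroup X)]
    (hP : IsUniformPSpace X) (hF : IsUniformFreeTopGroup X) :
    leftUnif (FreeGroup X) = rightUnif (FreeGroup X) ↔
      ∀ (n : ℕ) (ε : Set (FreeGroup X × FreeGroup X)),
        MemTrace (leftUnif (FreeGroup X)) (Bword X n) ε ↔
          MemTrace (rightUnif (FreeGroup X)) (Bword X n) ε := by
  constructor
  · intro h n ε
    rw [MemTrace, MemTrace, h]
  · intro h
    ext δ
    have exhaust : ∀ p : FreeGroup X × FreeGroup X, ∃ N,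
        p ∈ (Bword X N) ×ˢ (Bword X N) := by
      intro p
      refine ⟨max p.1.toWord.length p.2.toWord.length, Set.mem_prod.2 ⟨?_, ?_⟩⟩
      · show p.1.toWord.length ≤ max p.1.toWord.length p.2.toWord.length
        exact le_max_left _ _
      · show p.2.toWord.length ≤ max p.1.toWord.length p.2.toWord.length
        exact le_max_right _ _
    constructor
    · intro hδ
      have hδn : ∀ n, ∃ δn ∈ rightUnif (FreeGroup X),
          δn ∩ (Bword X n) ×ˢ (Bword X n) = δ ∩ (Bword X n) ×ˢ (Bword X n) :=
        fun n => (h n δ).1 ⟨δ, hδ, rfl⟩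
      choose δn hδn heq using hδn
      refine mem_of_superset (rightUnif_ctble hP hF δn hδn) ?_
      intro p hp
      obtain ⟨N, hN⟩ := exhaust p
      have : p ∈ δn N ∩ (Bword X N) ×ˢ (Bword X N) := ⟨mem_iInter.1 hp N, hN⟩
      rw [heq N] at this
      exact this.1
    · intro hδ
      have hδn : ∀ n, ∃ δn ∈ leftUnif (FreeGroup X),
          δn ∩ (Bword X n) ×ˢ (Bword X n) = δ ∩ (Bword X n) ×ˢ (Bword X n) :=
        fun n => (h n δ).2 ⟨δ, hδ, rfl⟩
      choose δn hδn heq using hδn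
      refine mem_of_superset (leftUnif_ctble hP hF δn hδn) ?_
      intro p hp
      obtain ⟨N, hN⟩ := exhaust p
      have : p ∈ δn N ∩ (Bword X N) ×ˢ (Bword X N) := ⟨mem_iInter.1 hp N, hN⟩
      rw [heq N] at this
      exact this.1
end

section
/- Let (X, U) be a uniform P-space and G = F(X, U) the uniform free topological group, and Bₙ the set of words of length ≤ n. If every Bₙ is functionally balanced, then G is functionally balanced. -/
open Filter Set Topology Pointwise

universe u v

section PGroup

variable {G : Type*} [Group G] [TopologicalSpace G] [IsTopologicalGroup G]

/-- The Gδ-modification filter basis of a topological group. -/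
def pModBasis (G : Type*) [Group G] [TopologicalSpace G] [IsTopologicalGroup G] :
    GroupFilterBasis G where
  sets := {U | ∃ s : ℕ → Set G, (∀ n, s n ∈ nhds (1 : G)) ∧ U = ⋂ n, s n}
  nonempty := ⟨Set.univ, fun _ => Set.univ, fun _ => Filter.univ_mem, by simp⟩
  inter_sets := by
    rintro U V ⟨s, hs, rfl⟩ ⟨t, ht, rfl⟩
    refine ⟨(⋂ n, s n) ∩ ⋂ n, t n, ⟨fun n => s n ∩ t n, fun n => Filter.inter_mem (hs n) (ht n),
      ?_⟩, le_refl _⟩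
    ext x; simp [Set.mem_iInter, forall_and]
  one' := by
    rintro U ⟨s, hs, rfl⟩
    exact Set.mem_iInter.2 fun n => mem_of_mem_nhds (hs n)
  mul' := by
    rintro U ⟨s, hs, rfl⟩
    choose V hVo hV1 hVm using fun n => exists_open_nhds_one_mul_subset (hs n)
    refine ⟨⋂ n, V n, ⟨V, fun n => (hVo n).mem_nhds (hV1 n), rfl⟩, ?_⟩
    rintro x ⟨a, ha, b, hb, rfl⟩
    exact Set.mem_iInter.2 fun n =>
      hVm n (Set.mul_mem_mul (Set.mem_iInter.1 ha n) (Set.mem_iInter.1 hb n))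
  inv' := by
    rintro U ⟨s, hs, rfl⟩
    refine ⟨⋂ n, (fun x : G => x⁻¹) ⁻¹' s n,
      ⟨fun n => (fun x : G => x⁻¹) ⁻¹' s n, fun n => ?_, rfl⟩, ?_⟩
    · have : Filter.Tendsto (fun x : G => x⁻¹) (nhds 1) (nhds 1) := by
        simpa using (continuous_inv (G := G)).tendsto (1 : G)
      exact this (hs n)
    · intro x hx
      exact Set.mem_iInter.2 fun n => Set.mem_iInter.1 hx n
  conj' := by
    intro x₀ U hU
    obtain ⟨s, hs, rfl⟩ := hU
    refine ⟨⋂ n, (fun x : G => x₀ * x * x₀⁻¹) ⁻¹' s n,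
      ⟨fun n => (fun x : G => x₀ * x * x₀⁻¹) ⁻¹' s n, fun n => ?_, rfl⟩, ?_⟩
    · have hc : Filter.Tendsto (fun x : G => x₀ * x * x₀⁻¹) (nhds 1) (nhds 1) := by
        have : Continuous fun x : G => x₀ * x * x₀⁻¹ :=
          (continuous_const.mul continuous_id).mul continuous_const
        simpa using this.tendsto (1 : G)
      exact hc (hs n)
    · intro x hx
      exact Set.mem_iInter.2 fun n => Set.mem_iInter.1 hx n

end PGroup

/-- Over a uniform P-space, the neighbourhood filter of `1` in the uniform free topological
group is closed under countable intersections. -/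
theorem nhds_one_pclosed (X : Type u) [UniformSpace X]
    [TopologicalSpace (FreeGroup X)] [IsTopologicalGroup (FreeGroup X)]
    (hP : IsUniformPSpace X) (hF : IsUniformFreeTopGroup X)
    (s : ℕ → Set (FreeGroup X)) (hs : ∀ n, s n ∈ nhds (1 : FreeGroup X)) :
    (⋂ n, s n) ∈ nhds (1 : FreeGroup X) := by
  set B := pModBasis (FreeGroup X) with hB
  -- the canonical map is uniformly continuous into the P-modified topology
  have hmemB : ∀ V ∈ B.toFilterBasis.filter,
      (Prod.map (FreeGroup.of : X → FreeGroup X) FreeGroup.of) ⁻¹'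
        ((fun p : FreeGroup X × FreeGroup X => p.1⁻¹ * p.2) ⁻¹' V) ∈ uniformity X ∧
      (Prod.map (FreeGroup.of : X → FreeGroup X) FreeGroup.of) ⁻¹'
        ((fun p : FreeGroup X × FreeGroup X => p.1 * p.2⁻¹) ⁻¹' V) ∈ uniformity X := by
    intro V hV
    obtain ⟨W, hWB, hWV⟩ := B.toFilterBasis.mem_filter_iff.1 hV
    obtain ⟨t, ht, rfl⟩ := hWB
    have hL : Filter.Tendsto (fun p : X × X => (FreeGroup.of p.1)⁻¹ * FreeGroup.of p.2)
        (uniformity X) (nhds (1 : FreeGroup X)) := by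
      have := hF.1.mono_right (inf_le_left : twoSidedUnif (FreeGroup X) ≤ leftUnif (FreeGroup X))
      rw [leftUnif, Filter.tendsto_comap_iff] at this
      exact this
    have hR : Filter.Tendsto (fun p : X × X => FreeGroup.of p.1 * (FreeGroup.of p.2)⁻¹)
        (uniformity X) (nhds (1 : FreeGroup X)) := by
      have := hF.1.mono_right (inf_le_right : twoSidedUnif (FreeGroup X) ≤ rightUnif (FreeGroup X))
      rw [rightUnif, Filter.tendsto_comap_iff] at this
      exact this
    constructor
    · have : (⋂ n, (fun p : X × X => (FreeGroup.of p.1)⁻¹ * FreeGroup.of p.2) ⁻¹' t n) ∈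
          uniformity X := hP _ fun n => hL (ht n)
      refine Filter.mem_of_superset this ?_
      intro p hp
      refine hWV ?_
      exact Set.mem_iInter.2 fun n => Set.mem_iInter.1 hp n
    · have : (⋂ n, (fun p : X × X => FreeGroup.of p.1 * (FreeGroup.of p.2)⁻¹) ⁻¹' t n) ∈
          uniformity X := hP _ fun n => hR (ht n)
      refine Filter.mem_of_superset this ?_
      intro p hp
      refine hWV ?_
      exact Set.mem_iInter.2 fun n => Set.mem_iInter.1 hp n
  -- the universal property applied to the P-modified topology
  have htd : Filter.Tendsto (Prod.map (FreeGroup.of : X → FreeGroup X) FreeGroup.of)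
      (uniformity X) (@twoSidedUnif (FreeGroup X) _ B.topology) := by
    rw [twoSidedUnif, Filter.tendsto_inf]
    have hnhds : @nhds (FreeGroup X) B.topology (1 : FreeGroup X) = B.toFilterBasis.filter :=
      B.nhds_one_eq
    constructor
    · rw [leftUnif, Filter.tendsto_comap_iff, hnhds]
      intro V hV
      exact (hmemB V hV).1
    · rw [rightUnif, Filter.tendsto_comap_iff, hnhds]
      intro V hV
      exact (hmemB V hV).2
  have h2 := hF.2
  have hcont : Continuous[_, B.topology] ⇑(FreeGroup.lift (FreeGroup.of : X → FreeGroup X)) :=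
    @h2 (FreeGroup X) _ B.topology B.isTopologicalGroup FreeGroup.of htd
  have hlift : ⇑(FreeGroup.lift (FreeGroup.of : X → FreeGroup X)) = id := by
    funext x
    exact (FreeGroup.lift_unique (MonoidHom.id _) (fun _ => rfl)).symm
  rw [hlift] at hcont
  -- continuity of the identity map gives the conclusion
  have hmem : (⋂ n, s n) ∈ B.toFilterBasis.filter :=
    B.toFilterBasis.mem_filter_of_mem ⟨s, hs, rfl⟩
  have hle : nhds (1 : FreeGroup X) ≤ @nhds (FreeGroup X) B.topology (1 : FreeGroup X) := by
    have := (@continuous_iff_continuousAt _ _ _ B.topology id).1 hcont 1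
    simpa [ContinuousAt, Filter.Tendsto] using this
  exact hle (by rw [B.nhds_one_eq]; exact hmem)

/-- over a uniform P-space, if each ball `Bₙ` is functionally balanced, then
the uniform free topological group is functionally balanced. -/
theorem uniformFree_funBalanced_of_balls (X : Type u) [UniformSpace X] [DecidableEq X]
    [TopologicalSpace (FreeGroup X)] [IsTopologicalGroup (FreeGroup X)]
    (hP : IsUniformPSpace X) (hF : IsUniformFreeTopGroup X)
    (hballs : ∀ n : ℕ, FunBalancedOn (FreeGroup X) (Bword X n)) :
    FunBalancedOn (FreeGroup X) Set.univ := by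
  intro f hbd hleft
  intro e he
  -- restrict f to each ball
  have hres : ∀ n : ℕ, ∃ δ ∈ rightUnif (FreeGroup X),
      ∀ x y : Bword X n, ((x : FreeGroup X), (y : FreeGroup X)) ∈ δ →
        |f ⟨x, Set.mem_univ _⟩ - f ⟨y, Set.mem_univ _⟩| < e := by
    intro n
    have := hballs n (fun x : Bword X n => f ⟨x, Set.mem_univ _⟩)
      (by obtain ⟨M, hM⟩ := hbd; exact ⟨M, fun x => hM _⟩)
      (by
        intro e' he'
        obtain ⟨δ, hδ, hδ'⟩ := hleft e' he'
        exact ⟨δ, hδ, fun x y hxy => hδ' ⟨x, Set.mem_univ _⟩ ⟨y, Set.mem_univ _⟩ hxy⟩)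
    exact this e he
  choose δ hδmem hδ using hres
  -- each δ n contains the preimage of a neighbourhood of 1
  have hδ' : ∀ n, ∃ s ∈ nhds (1 : FreeGroup X),
      (fun p : FreeGroup X × FreeGroup X => p.1 * p.2⁻¹) ⁻¹' s ⊆ δ n := by
    intro n
    obtain ⟨s, hs, hss⟩ := Filter.mem_comap.1 (hδmem n)
    exact ⟨s, hs, hss⟩
  choose s hsmem hssub using hδ'
  have hinter : (⋂ n, s n) ∈ nhds (1 : FreeGroup X) := nhds_one_pclosed X hP hF s hsmem
  refine ⟨(fun p : FreeGroup X × FreeGroup X => p.1 * p.2⁻¹) ⁻¹' (⋂ n, s n),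
    Filter.preimage_mem_comap hinter, ?_⟩
  intro x y hxy
  set n : ℕ := max (x : FreeGroup X).toWord.length (y : FreeGroup X).toWord.length with hn
  have hxB : (x : FreeGroup X) ∈ Bword X n := by
    simp only [Bword, Set.mem_setOf_eq, hn]; exact le_max_left _ _
  have hyB : (y : FreeGroup X) ∈ Bword X n := by
    simp only [Bword, Set.mem_setOf_eq, hn]; exact le_max_right _ _
  have hmem : ((x : FreeGroup X), (y : FreeGroup X)) ∈ δ n := by
    apply hssub n
    exact Set.mem_iInter.1 hxy n
  have := hδ n ⟨x, hxB⟩ ⟨y, hyB⟩ hmem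
  simpa using this
end
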